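/- arXiv:1108.0008 — 6 statements merged into one kernel-verified Lean document; each statement's English description precedes it below -/
import Mathlib

section
/- If a set S ⊆ ℂ is locally interpolable by real-analytic curves, then the topological closure of S has empty interior. -/
open Complex Filter Finset Topology

/-- Divided differences over a list of points, evaluated at a point `w`:
`divDiff [ηₚ, …, η₁] h w = Δ_{p,(ηₚ,…,η₁)}(h)(w)`. -/
noncomputable def divDiff : List ℂ → (ℂ → ℂ) → ℂ → ℂ
  | [], h, w => h w
  | a :: l, h, w => (divDiff l h w - divDiff l h a) / (w - a)

/-- `deltaP η h p = Δ_{p,(η_p,…,η_1)}(h)(η_{p+1})` (with 0-indexed `η`,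
so the points are `η 0, …, η (p-1)` and the evaluation point is `η p`). -/
noncomputable def deltaP (η : ℕ → ℂ) (h : ℂ → ℂ) (p : ℕ) : ℂ :=
  divDiff (((List.range p).reverse).map η) h (η p)

/-- The interpolation formula `E_N(f;η)(z)` (with 0-indexed `η`, so that the
paper's points `η_1, …, η_N` are `η 0, …, η (N-1)`). -/
noncomputable def EN (η : ℕ → ℂ) (f : ℂ × ℂ → ℂ) (N : ℕ) (z : ℂ × ℂ) : ℂ :=
  ∑ p ∈ Finset.range N,
    (∏ j ∈ Finset.Ico (p + 1) N, (z.1 - η j * z.2)) *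
      ∑ q ∈ Finset.Icc p (N - 1),
        ((1 + η p * (starRingEnd ℂ) (η q)) / (1 + (Complex.normSq (η q) : ℂ))) *
          (∏ j ∈ (Finset.Icc p (N - 1)).erase q, (η q - η j))⁻¹ *
          ∑' n : ℕ,
            ((z.2 + (starRingEnd ℂ) (η q) * z.1) / (1 + (Complex.normSq (η q) : ℂ))) ^ n *
              (1 / (Nat.factorial (N - 1 - p + n) : ℂ)) *
              iteratedDeriv (N - 1 - p + n) (fun v => f (η q * v, v)) 0

/-- `E_N(f;η)` converges to `f` uniformly on every compact subset of `ℂ²` as `N → ∞`. -/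
def ENConverges (η : ℕ → ℂ) (f : ℂ × ℂ → ℂ) : Prop :=
  ∀ K : Set (ℂ × ℂ), IsCompact K →
    TendstoUniformlyOn (fun N z => EN η f N z) f Filter.atTop K

/-- A set `S ⊆ ℂ` is locally interpolable by real-analytic curves. -/
def LocallyInterpolable (S : Set ℂ) : Prop :=
  ∀ ζ ∈ closure S, ∃ V : Set ℂ, IsOpen V ∧ ζ ∈ V ∧
    ∃ g : ℂ → ℂ, DifferentiableOn ℂ g V ∧ ∀ η ∈ S ∩ V, (starRingEnd ℂ) η = g η

/-- Condition (1.2) from Theorem 1. -/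
def Cond12 (η : ℕ → ℂ) : Prop :=
  ∃ R : ℝ, 0 < R ∧ ∀ p q : ℕ,
    ‖deltaP η (fun ζ => ((starRingEnd ℂ) ζ / (1 + (Complex.normSq ζ : ℂ))) ^ q) p‖ ≤ R ^ (p + q)

/-- Complex conjugation is nowhere ℂ-differentiable. -/
lemma not_diff_conj (z : ℂ) : ¬ DifferentiableAt ℂ (starRingEnd ℂ) z := by
  intro hd
  have h1 : HasFDerivAt (starRingEnd ℂ) (Complex.conjCLE : ℂ →L[ℝ] ℂ) z := by
    have := (Complex.conjCLE : ℂ →L[ℝ] ℂ).hasFDerivAt (x := z)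
    exact this
  have h2 := (hd.hasFDerivAt).restrictScalars ℝ
  have h3 : (fderiv ℂ (starRingEnd ℂ) z).restrictScalars ℝ = (Complex.conjCLE : ℂ →L[ℝ] ℂ) :=
    h2.unique h1
  have hI : (fderiv ℂ (starRingEnd ℂ) z) I = -I := by
    have := congrArg (fun L : ℂ →L[ℝ] ℂ => L I) h3
    simpa [Complex.conjCLE_apply] using this
  have h1' : (fderiv ℂ (starRingEnd ℂ) z) 1 = 1 := by
    have := congrArg (fun L : ℂ →L[ℝ] ℂ => L 1) h3
    simpa [Complex.conjCLE_apply] using this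
  have : (fderiv ℂ (starRingEnd ℂ) z) I = I := by
    calc (fderiv ℂ (starRingEnd ℂ) z) I = I • (fderiv ℂ (starRingEnd ℂ) z) 1 := by
          rw [← map_smul]; norm_num
      _ = I := by rw [h1']; simp
  rw [this] at hI
  exact Complex.I_ne_zero (by linear_combination hI / 2)

/-- Lemma: the closure of a locally interpolable set has empty interior. -/
theorem stmt7 (S : Set ℂ) (h : LocallyInterpolable S) :
    interior (closure S) = ∅ := by
  by_contra hne
  obtain ⟨ζ, hζ⟩ := Set.nonempty_iff_ne_empty.2 hne
  have hζc : ζ ∈ closure S := interior_subset hζ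
  obtain ⟨V, hVopen, hζV, g, hg, hSg⟩ := h ζ hζc
  set U := V ∩ interior (closure S) with hU
  have hUopen : IsOpen U := hVopen.inter isOpen_interior
  have hζU : ζ ∈ U := ⟨hζV, hζ⟩
  have heq : Set.EqOn (starRingEnd ℂ) g U := by
    intro z hz
    have hzc : z ∈ closure (S ∩ V) := by
      rw [mem_closure_iff]
      intro o ho hzo
      have hz' : z ∈ closure S := interior_subset hz.2
      rcases mem_closure_iff.1 hz' (o ∩ V) (ho.inter hVopen) ⟨hzo, hz.1⟩ with ⟨w, hw⟩
      exact ⟨w, hw.1.1, hw.2, hw.1.2⟩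
    have hnb : (𝓝[S ∩ V] z).NeBot := mem_closure_iff_nhdsWithin_neBot.1 hzc
    have hgc : ContinuousAt g z :=
      (hg.differentiableAt (hVopen.mem_nhds hz.1)).continuousAt
    have t1 : Filter.Tendsto (starRingEnd ℂ) (𝓝[S ∩ V] z) (𝓝 ((starRingEnd ℂ) z)) :=
      (Complex.continuous_conj.continuousAt).continuousWithinAt
    have t2 : Filter.Tendsto g (𝓝[S ∩ V] z) (𝓝 (g z)) := hgc.continuousWithinAt
    have t1' : Filter.Tendsto g (𝓝[S ∩ V] z) (𝓝 ((starRingEnd ℂ) z)) := by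
      refine t1.congr' ?_
      filter_upwards [self_mem_nhdsWithin] with w hw using hSg w hw
    exact tendsto_nhds_unique t1' t2
  have hd : DifferentiableAt ℂ g ζ := hg.differentiableAt (hVopen.mem_nhds hζV)
  have hev : (starRingEnd ℂ) =ᶠ[𝓝 ζ] g := by
    filter_upwards [hUopen.mem_nhds hζU] with w hw using heq hw
  exact not_diff_conj ζ (hd.congr_of_eventuallyEq hev)
end

section
/- For each integer r ≥ 0 let 𝒜_r = {(s + it)/2^r : s, t ∈ ℤ, 0 ≤ s ≤ 2^r, 0 ≤ t ≤ 2^r} ⊆ ℂ. Let (η_j)_{j≥1} be an injective sequence whose range equals ∪_{r≥0} 𝒜_r and such that for every r ≥ 0, the first (2^r+1)² terms η_1, …, η_{(2^r+1)²} all belong to 𝒜_r. Then there exists an integer p_η ≥ 2 such that for all p ≥ p_η and all q ∈ {1, …, p+1}, one has Π_{j=1, j≠q}^{p+1} |η_q − η_j| ≥ exp(−16p). -/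
open Complex Filter Finset Topology

/-- The `(1/2^r)`-net of the unit square `[0,1] + i[0,1]`. -/
def Anet (r : ℕ) : Set ℂ :=
  {z : ℂ | ∃ s t : ℕ, s ≤ 2 ^ r ∧ t ≤ 2 ^ r ∧
    z = ((s : ℂ) + (t : ℂ) * Complex.I) / (2 ^ r : ℂ)}


/-- If at most `K` elements have `f`-value `≤ K` (for every `K`), then the product of `f`
over `S` is at least `|S|!`. -/
lemma aux_factorial_le_prod {ι : Type*} [DecidableEq ι] (S : Finset ι) (f : ι → ℕ)
    (h : ∀ K, (S.filter fun j => f j ≤ K).card ≤ K) :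
    S.card.factorial ≤ ∏ j ∈ S, f j := by
  induction S using Finset.strongInduction with
  | _ S ih =>
    rcases S.eq_empty_or_nonempty with rfl | hS
    · simp
    · obtain ⟨j₀, hj₀S, hj₀⟩ : ∃ j₀ ∈ S, S.card ≤ f j₀ := by
        by_contra hc
        push_neg at hc
        have hfe : S.filter (fun j => f j ≤ S.card - 1) = S := by
          apply Finset.filter_true_of_mem
          intro j hj
          have := hc j hj
          omega
        have := h (S.card - 1)
        rw [hfe] at this
        have hcp := Finset.card_pos.mpr hS
        omega
      have hcard : (S.erase j₀).card = S.card - 1 := Finset.card_erase_of_mem hj₀S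
      have hih : (S.erase j₀).card.factorial ≤ ∏ j ∈ S.erase j₀, f j := by
        apply ih _ (Finset.erase_ssubset hj₀S)
        intro K
        exact le_trans (Finset.card_le_card (Finset.filter_subset_filter _
          (Finset.erase_subset _ _))) (h K)
      have hpos := Finset.card_pos.mpr hS
      calc S.card.factorial = S.card * (S.card - 1).factorial := by
            rcases Nat.exists_eq_succ_of_ne_zero hpos.ne' with ⟨m, hm⟩
            rw [hm]; simp [Nat.factorial_succ]
        _ ≤ f j₀ * ∏ j ∈ S.erase j₀, f j := by
            apply Nat.mul_le_mul hj₀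
            rw [← hcard] at *; exact hih
        _ = ∏ j ∈ S, f j := Finset.mul_prod_erase S f hj₀S

/-- `n^n ≤ e^n * n!`. -/
lemma aux_pow_le_exp_mul_factorial (n : ℕ) :
    (n : ℝ) ^ n ≤ Real.exp n * n.factorial := by
  induction n with
  | zero => simp
  | succ n ih =>
    push_cast
    have hb : ((n : ℝ) + 1) ^ n ≤ Real.exp 1 * (n : ℝ) ^ n := by
      rcases Nat.eq_zero_or_pos n with rfl | hn
      · simp [Real.one_le_exp (by norm_num : (0:ℝ) ≤ 1)]
      · have hn' : (0:ℝ) < n := by exact_mod_cast hn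
        have h1 : (n : ℝ) + 1 = (n : ℝ) * (1 + 1 / n) := by field_simp
        have h2 : (1 + 1 / (n:ℝ)) ^ n ≤ Real.exp 1 := by
          have := Real.add_one_le_exp (1 / (n:ℝ))
          calc (1 + 1 / (n:ℝ)) ^ n ≤ (Real.exp (1 / n)) ^ n := by
                apply pow_le_pow_left₀ (by positivity)
                linarith
            _ = Real.exp 1 := by
                rw [← Real.exp_nat_mul]
                congr 1
                field_simp
        calc ((n : ℝ) + 1) ^ n = (n : ℝ) ^ n * (1 + 1 / n) ^ n := by
              rw [h1, mul_pow]
          _ ≤ (n : ℝ) ^ n * Real.exp 1 := by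
              apply mul_le_mul_of_nonneg_left h2 (by positivity)
          _ = Real.exp 1 * (n : ℝ) ^ n := mul_comm _ _
    calc ((n : ℝ) + 1) ^ (n + 1) = ((n:ℝ)+1) * ((n:ℝ)+1) ^ n := by ring
      _ ≤ ((n:ℝ)+1) * (Real.exp 1 * (n : ℝ) ^ n) := by
          apply mul_le_mul_of_nonneg_left hb (by positivity)
      _ ≤ ((n:ℝ)+1) * (Real.exp 1 * (Real.exp n * n.factorial)) := by
          apply mul_le_mul_of_nonneg_left _ (by positivity)
          apply mul_le_mul_of_nonneg_left ih (by positivity)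
      _ = Real.exp (n + 1) * ((n+1) * n.factorial) := by
          rw [Real.exp_add]; ring
      _ = Real.exp ((n:ℝ) + 1) * (n+1).factorial := by
          rw [Nat.factorial_succ]; push_cast; ring

/-- Lemma: lower bound for the products of mutual distances. -/
theorem stmt11 (η : ℕ → ℂ) (hinj : Function.Injective η)
    (hrange : Set.range η = ⋃ r, Anet r)
    (hfirst : ∀ r : ℕ, ∀ j < (2 ^ r + 1) ^ 2, η j ∈ Anet r) :
    ∃ pη : ℕ, 2 ≤ pη ∧ ∀ p ≥ pη, ∀ q ≤ p,
      Real.exp (-16 * (p : ℝ)) ≤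
        ∏ j ∈ (Finset.range (p + 1)).erase q, ‖η q - η j‖ := by
  classical
  refine ⟨4, by norm_num, ?_⟩
  intro p hp q hq
  -- choose the minimal `r` with `p + 1 ≤ (2^r + 1)^2`
  have hex : ∃ r : ℕ, p + 1 ≤ (2 ^ r + 1) ^ 2 := by
    refine ⟨p, ?_⟩
    have h : p < 2 ^ p := Nat.lt_two_pow_self
    nlinarith
  set r := Nat.find hex with hrdef
  have hr : p + 1 ≤ (2 ^ r + 1) ^ 2 := Nat.find_spec hex
  have hrpos : 1 ≤ r := by
    rcases Nat.eq_zero_or_pos r with h0 | h1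
    · exfalso
      rw [h0] at hr
      norm_num at hr
      omega
    · exact h1
  have hmin : (2 ^ (r - 1) + 1) ^ 2 < p + 1 := by
    have := Nat.find_min hex (show r - 1 < r by omega)
    omega
  -- `(2^r)^2 ≤ 4 p`
  have h4r : (2 ^ r) ^ 2 ≤ 4 * p := by
    have h2 : 2 ^ r = 2 * 2 ^ (r - 1) := by
      rw [← pow_succ']
      congr 1
      omega
    rw [h2]
    have hexp : (2 ^ (r-1) + 1) ^ 2 = 2 ^ (r-1) * 2 ^ (r-1) + 2 * 2 ^ (r-1) + 1 := by ring
    have hgoal : (2 * 2 ^ (r-1)) ^ 2 = 4 * (2 ^ (r-1) * 2 ^ (r-1)) := by ring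
    rw [hexp] at hmin
    rw [hgoal]
    omega
  -- coordinates of the first points
  have hmem : ∀ j, j ≤ p → ∃ s t : ℕ, s ≤ 2 ^ r ∧ t ≤ 2 ^ r ∧
      η j = ((s : ℂ) + (t : ℂ) * Complex.I) / (2 ^ r : ℂ) := by
    intro j hj
    exact hfirst r j (by omega)
  choose! s t hs ht hη using hmem
  have h2r0 : ((2:ℂ) ^ r) ≠ 0 := pow_ne_zero _ two_ne_zero
  -- equal coordinates means equal index
  have hcoord : ∀ j ≤ p, ∀ k ≤ p, s j = s k → t j = t k → j = k := by
    intro j hj k hk hsjk htjk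
    apply hinj
    rw [hη j hj, hη k hk, hsjk, htjk]
  -- the Chebyshev lattice distance to `η q`
  set d : ℕ → ℕ := fun j => max (((s q : ℤ) - s j).natAbs) (((t q : ℤ) - t j).natAbs)
    with hddef
  set S : Finset ℕ := (Finset.range (p + 1)).erase q with hSdef
  have hmemS : ∀ j ∈ S, j ≤ p ∧ j ≠ q := by
    intro j hj
    rw [hSdef, Finset.mem_erase, Finset.mem_range] at hj
    omega
  have hcardS : S.card = p := by
    rw [hSdef, Finset.card_erase_of_mem (by simp [Finset.mem_range]; omega),
      Finset.card_range]
    omega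
  have hd1 : ∀ j ∈ S, 1 ≤ d j := by
    intro j hj
    obtain ⟨hjp, hjq⟩ := hmemS j hj
    by_contra h0
    have hd0 : d j = 0 := by omega
    rw [hddef] at hd0
    simp only [Nat.max_eq_zero_iff, Int.natAbs_eq_zero, sub_eq_zero] at hd0
    exact hjq (hcoord j hjp q hq ((by exact_mod_cast hd0.1 : s q = s j)).symm ((by exact_mod_cast hd0.2 : t q = t j)).symm)
  -- distance lower bound
  have hdist : ∀ j ∈ S, (d j : ℝ) / 2 ^ r ≤ ‖η q - η j‖ := by
    intro j hj
    obtain ⟨hjp, hjq⟩ := hmemS j hj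
    have hsub : η q - η j =
        ((((s q : ℝ) - s j : ℝ) : ℂ) + (((t q : ℝ) - t j : ℝ) : ℂ) * Complex.I) /
          (2 ^ r : ℂ) := by
      rw [hη q hq, hη j hjp]
      push_cast
      field_simp
      ring
    set z : ℂ := (((s q : ℝ) - s j : ℝ) : ℂ) + (((t q : ℝ) - t j : ℝ) : ℂ) * Complex.I
      with hzdef
    have hnorm : ‖η q - η j‖ = ‖z‖ / 2 ^ r := by
      rw [hsub, norm_div]
      congr 1
      simp
    have hre : z.re = (s q : ℝ) - s j := by simp [hzdef]
    have him : z.im = (t q : ℝ) - t j := by simp [hzdef]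
    rw [hnorm]
    apply div_le_div_of_nonneg_right ?_ (by positivity)
    have hA : ((((s q : ℤ) - s j).natAbs : ℝ)) ≤ ‖z‖ := by
      rw [Nat.cast_natAbs]
      push_cast
      rw [← hre]
      exact Complex.abs_re_le_norm z
    have hB : ((((t q : ℤ) - t j).natAbs : ℝ)) ≤ ‖z‖ := by
      rw [Nat.cast_natAbs]
      push_cast
      rw [← him]
      exact Complex.abs_im_le_norm z
    simp only [hddef]
    rw [Nat.cast_max]
    exact max_le hA hB
  -- counting: at most (2K+1)^2 - 1 points within Chebyshev distance K
  have hcount : ∀ K : ℕ, (S.filter fun j => d j ≤ K).card ≤ (2 * K + 1) ^ 2 - 1 := by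
    intro K
    set T : Finset (ℤ × ℤ) :=
      ((Finset.Icc ((s q : ℤ) - K) ((s q : ℤ) + K)) ×ˢ
        (Finset.Icc ((t q : ℤ) - K) ((t q : ℤ) + K))).erase ((s q : ℤ), (t q : ℤ)) with hTdef
    have hTmem : ((s q : ℤ), (t q : ℤ)) ∈
        (Finset.Icc ((s q : ℤ) - K) ((s q : ℤ) + K)) ×ˢ
        (Finset.Icc ((t q : ℤ) - K) ((t q : ℤ) + K)) := by
      rw [Finset.mem_product, Finset.mem_Icc, Finset.mem_Icc]
      omega
    have hTcard : T.card = (2 * K + 1) ^ 2 - 1 := by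
      rw [hTdef, Finset.card_erase_of_mem hTmem, Finset.card_product, Int.card_Icc,
        Int.card_Icc]
      have h1 : ((s q : ℤ) + K + 1 - ((s q : ℤ) - K)).toNat = 2 * K + 1 := by omega
      have h2 : ((t q : ℤ) + K + 1 - ((t q : ℤ) - K)).toNat = 2 * K + 1 := by omega
      rw [h1, h2]
      ring_nf
    calc (S.filter fun j => d j ≤ K).card ≤ T.card := by
          apply Finset.card_le_card_of_injOn (fun j => ((s j : ℤ), (t j : ℤ)))
          · intro j hj
            rw [Finset.mem_coe, Finset.mem_filter] at hj
            obtain ⟨hjS, hdK⟩ := hj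
            obtain ⟨hjp, hjq⟩ := hmemS j hjS
            have hdj : max (((s q : ℤ) - s j).natAbs) (((t q : ℤ) - t j).natAbs) ≤ K := hdK
            rw [max_le_iff] at hdj
            rw [Finset.mem_coe, hTdef, Finset.mem_erase, Finset.mem_product, Finset.mem_Icc, Finset.mem_Icc]
            refine ⟨?_, ?_⟩
            · intro heq
              apply hjq
              have hs' : (s j : ℤ) = s q := congrArg Prod.fst heq
              have ht' : (t j : ℤ) = t q := congrArg Prod.snd heq
              exact hcoord j hjp q hq (by exact_mod_cast hs') (by exact_mod_cast ht')
            · obtain ⟨h1, h2⟩ := hdj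
              dsimp only
              omega
          · intro j hj k hk heq
            rw [Finset.mem_coe, Finset.mem_filter] at hj hk
            have hs' : (s j : ℤ) = s k := congrArg Prod.fst heq
            have ht' : (t j : ℤ) = t k := congrArg Prod.snd heq
            exact hcoord j (hmemS j hj.1).1 k (hmemS k hk.1).1 (by exact_mod_cast hs')
              (by exact_mod_cast ht')
      _ = (2 * K + 1) ^ 2 - 1 := hTcard
  -- factorial lower bound for the product of the `8 * d j ^ 2`
  have hfac : p.factorial ≤ ∏ j ∈ S, (8 * d j ^ 2) := by
    rw [← hcardS]
    apply aux_factorial_le_prod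
    intro K
    rcases lt_or_ge K 8 with hK | hK
    · have hempty : S.filter (fun j => 8 * d j ^ 2 ≤ K) = ∅ := by
        rw [Finset.filter_eq_empty_iff]
        intro j hj
        have h1 := hd1 j hj
        have h2 : 1 ≤ d j ^ 2 := Nat.one_le_pow _ _ (by omega)
        omega
      simp [hempty]
    · set m := Nat.sqrt (K / 8) with hmdef
      have hm1 : 1 ≤ m := by
        rw [hmdef]
        apply Nat.le_sqrt.mpr
        omega
      have hmm : m * m ≤ K / 8 := by
        rw [hmdef, ← pow_two]
        exact Nat.sqrt_le' (K / 8)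
      have hsubf : S.filter (fun j => 8 * d j ^ 2 ≤ K) ⊆ S.filter (fun j => d j ≤ m) := by
        apply Finset.monotone_filter_right
        intro j _ hj
        have h1 : d j * d j ≤ K / 8 := by
          rw [Nat.le_div_iff_mul_le (by norm_num)]
          have : d j * d j * 8 = 8 * d j ^ 2 := by ring
          omega
        exact Nat.le_sqrt.mpr h1
      calc (S.filter (fun j => 8 * d j ^ 2 ≤ K)).card
          ≤ (S.filter (fun j => d j ≤ m)).card := Finset.card_le_card hsubf
        _ ≤ (2 * m + 1) ^ 2 - 1 := hcount m
        _ ≤ 8 * (m * m) := by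
            apply Nat.sub_le_iff_le_add.mpr
            nlinarith [hm1]
        _ ≤ 8 * (K / 8) := by
            exact Nat.mul_le_mul_left _ hmm
        _ ≤ K := by omega
  -- pass to the reals
  set D : ℝ := ∏ j ∈ S, (d j : ℝ) with hDdef
  have hD0 : (0:ℝ) ≤ D := Finset.prod_nonneg (fun j _ => by positivity)
  have hDfac : (p.factorial : ℝ) ≤ 8 ^ p * D ^ 2 := by
    have hcast : ((∏ j ∈ S, (8 * d j ^ 2) : ℕ) : ℝ) = 8 ^ p * D ^ 2 := by
      push_cast
      rw [Finset.prod_mul_distrib, Finset.prod_const, hcardS, ← Finset.prod_pow]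
    calc (p.factorial : ℝ) ≤ ((∏ j ∈ S, (8 * d j ^ 2) : ℕ) : ℝ) := by exact_mod_cast hfac
      _ = 8 ^ p * D ^ 2 := hcast
  have hprod : D / ((2:ℝ) ^ r) ^ p ≤ ∏ j ∈ S, ‖η q - η j‖ := by
    have hle := Finset.prod_le_prod (s := S) (f := fun j => (d j : ℝ) / 2 ^ r)
      (g := fun j => ‖η q - η j‖) (fun j _ => by positivity) hdist
    calc D / ((2:ℝ) ^ r) ^ p = ∏ j ∈ S, ((d j : ℝ) / 2 ^ r) := by
          rw [Finset.prod_div_distrib, Finset.prod_const, hcardS]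
      _ ≤ _ := hle
  -- numerics
  have h2rp : ((2:ℝ) ^ r) ^ 2 ≤ 4 * p := by exact_mod_cast h4r
  have haux := aux_pow_le_exp_mul_factorial p
  have h32 : (32:ℝ) * Real.exp 1 ≤ Real.exp 32 := by
    have h1 : Real.exp 1 < 2.7182818286 := Real.exp_one_lt_d9
    have h2 : (2:ℝ) ≤ Real.exp 1 := by
      have := Real.exp_one_gt_d9
      linarith
    have h3 : (2:ℝ) ^ 32 ≤ Real.exp 1 ^ 32 := pow_le_pow_left₀ (by norm_num) h2 32
    have h4 : Real.exp 1 ^ 32 = Real.exp 32 := by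
      rw [← Real.exp_nat_mul]
      norm_num
    nlinarith [h3]
  have h1 : ((32:ℝ) * p) ^ p ≤ Real.exp (32 * p) * p.factorial := by
    have hexp1 : Real.exp (p : ℝ) = Real.exp 1 ^ p := by
      rw [← Real.exp_nat_mul]
      norm_num
    calc ((32:ℝ) * p) ^ p = 32 ^ p * (p:ℝ) ^ p := by rw [mul_pow]
      _ ≤ 32 ^ p * (Real.exp p * p.factorial) := by
          apply mul_le_mul_of_nonneg_left haux (by positivity)
      _ = (32 * Real.exp 1) ^ p * p.factorial := by
          rw [hexp1, mul_pow]
          ring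
      _ ≤ (Real.exp 32) ^ p * p.factorial := by
          apply mul_le_mul_of_nonneg_right (pow_le_pow_left₀ (by positivity) h32 p)
            (by positivity)
      _ = Real.exp (32 * p) * p.factorial := by
          rw [← Real.exp_nat_mul]
          ring_nf
  have hstep : Real.exp (-32 * p) * ((4:ℝ) * p) ^ p * 8 ^ p ≤ (p.factorial : ℝ) := by
    have heq : Real.exp (-32 * p) * ((4:ℝ) * p) ^ p * 8 ^ p
        = ((32:ℝ) * p) ^ p * Real.exp (-32 * p) := by
      rw [mul_assoc, ← mul_pow, show ((4:ℝ) * (p:ℝ)) * 8 = 32 * (p:ℝ) by ring]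
      ring
    rw [heq]
    calc ((32:ℝ) * p) ^ p * Real.exp (-32 * p)
        ≤ (Real.exp (32 * p) * p.factorial) * Real.exp (-32 * p) :=
          mul_le_mul_of_nonneg_right h1 (Real.exp_pos _).le
      _ = (p.factorial : ℝ) * (Real.exp (32 * p) * Real.exp (-32 * p)) := by ring
      _ = (p.factorial : ℝ) := by
          rw [← Real.exp_add]
          norm_num
  have hD2 : Real.exp (-32 * p) * ((4:ℝ) * p) ^ p ≤ D ^ 2 := by
    have h8 : (0:ℝ) < 8 ^ p := by positivity
    apply le_of_mul_le_mul_right _ h8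
    calc Real.exp (-32 * p) * ((4:ℝ) * p) ^ p * 8 ^ p ≤ (p.factorial : ℝ) := hstep
      _ ≤ 8 ^ p * D ^ 2 := hDfac
      _ = D ^ 2 * 8 ^ p := by ring
  have hsq : Real.exp (-16 * (p:ℝ)) ^ 2 ≤ (D / ((2:ℝ) ^ r) ^ p) ^ 2 := by
    have he : Real.exp (-16 * (p:ℝ)) ^ 2 = Real.exp (-32 * p) := by
      rw [← Real.exp_nat_mul]
      congr 1
      push_cast
      ring
    rw [he, div_pow, le_div_iff₀ (by positivity)]
    have hB2 : (((2:ℝ) ^ r) ^ p) ^ 2 = (((2:ℝ) ^ r) ^ 2) ^ p := by ring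
    rw [hB2]
    calc Real.exp (-32 * p) * (((2:ℝ) ^ r) ^ 2) ^ p
        ≤ Real.exp (-32 * p) * ((4:ℝ) * p) ^ p := by
          apply mul_le_mul_of_nonneg_left (pow_le_pow_left₀ (by positivity) h2rp p)
            (Real.exp_pos _).le
      _ ≤ D ^ 2 := hD2
  have hb0 : (0:ℝ) ≤ D / ((2:ℝ) ^ r) ^ p := by positivity
  have ha0 : (0:ℝ) < Real.exp (-16 * (p:ℝ)) := Real.exp_pos _
  have hab : Real.exp (-16 * (p:ℝ)) ≤ D / ((2:ℝ) ^ r) ^ p := by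
    nlinarith [hsq, ha0, hb0]
  exact le_trans hab hprod
end

section
/- For each integer r ≥ 0 let 𝒜_r = {(s + it)/2^r : s, t ∈ ℤ, 0 ≤ s ≤ 2^r, 0 ≤ t ≤ 2^r} ⊆ ℂ. Let (η_j)_{j≥1} be an injective sequence whose range equals ∪_{r≥0} 𝒜_r and such that for every r ≥ 0, the first (2^r+1)² terms η_1, …, η_{(2^r+1)²} all belong to 𝒜_r. Then there exists a constant R_η > 0 (depending only on η) such that for every function h : ℂ → ℂ with ‖h‖_∞ := sup_{j≥1} |h(η_j)| < ∞ and every integer p ≥ 0, one has |Δ_{p,(η_p,…,η_1)}(h)(η_{p+1})| ≤ ‖h‖_∞ · R_η^p. -/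
open Complex Filter Finset Topology

lemma geomsum : ∀ I : ℕ, ∑ i ∈ Finset.Icc 1 I, 8 * 4 ^ i ≤ 11 * 4 ^ I := by
  intro I
  induction I with
  | zero => simp
  | succ I IH =>
    rw [Finset.sum_Icc_succ_top (by omega)]
    have : (4:ℕ)^(I+1) = 4 * 4^I := by ring
    omega


lemma prod_lower (S : Finset ℕ) (f : ℕ → ℕ) (p : ℕ) (hcard : S.card = p)
    (h64 : 64 ≤ p) (hf1 : ∀ j ∈ S, 1 ≤ f j)
    (hcount : ∀ k : ℕ, 1 ≤ k → ((S.filter (fun j => f j ≤ k)).card ≤ 8 * k ^ 2)) :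
    p ≤ 64 * 4 ^ (Nat.log 4 (p / 16)) ∧
      2 ^ ((Nat.log 4 (p / 16) - 1) * p) ≤ ∏ j ∈ S, f j := by
  set I := Nat.log 4 (p / 16) with hI
  have h16 : 4 ≤ p / 16 := by omega
  have hlog := Nat.pow_log_le_self 4 (show p / 16 ≠ 0 by omega)
  rw [← hI] at hlog
  have hI1 : 1 ≤ I := by
    rw [hI]
    exact (Nat.le_log_iff_pow_le (by norm_num) (show p/16 ≠ 0 by omega)).mpr (by simpa using h16)
  have hIle : 16 * 4 ^ I ≤ p := by
    have : 16 * 4 ^ I ≤ 16 * (p / 16) := by omega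
    omega
  have hIge : p ≤ 64 * 4 ^ I := by
    have h2 := Nat.lt_pow_succ_log_self (b := 4) (by norm_num) (p / 16)
    rw [← hI] at h2
    have h3 : (4:ℕ)^(I+1) = 4 * 4^I := by ring
    omega
  refine ⟨hIge, ?_⟩
  classical
  have step1 : ∀ j ∈ S, ((Finset.Icc 1 I).filter (fun i => 2 ^ i ≤ f j)).card ≤ Nat.log 2 (f j) := by
    intro j hj
    have hsub : (Finset.Icc 1 I).filter (fun i => 2 ^ i ≤ f j) ⊆ Finset.Icc 1 (Nat.log 2 (f j)) := by
      intro i hi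
      simp only [Finset.mem_filter, Finset.mem_Icc] at hi ⊢
      exact ⟨hi.1.1, (Nat.le_log_iff_pow_le (by norm_num) (by have := hf1 j hj; omega)).mpr hi.2⟩
    calc _ ≤ (Finset.Icc 1 (Nat.log 2 (f j))).card := Finset.card_le_card hsub
      _ = Nat.log 2 (f j) := by rw [Nat.card_Icc]; omega
  have step2 : ∑ i ∈ Finset.Icc 1 I, (S.filter (fun j => 2 ^ i ≤ f j)).card
      ≤ ∑ j ∈ S, Nat.log 2 (f j) := by
    calc ∑ i ∈ Finset.Icc 1 I, (S.filter (fun j => 2 ^ i ≤ f j)).card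
        = ∑ i ∈ Finset.Icc 1 I, ∑ j ∈ S, (if 2 ^ i ≤ f j then 1 else 0) := by
          exact Finset.sum_congr rfl (fun i _ => by rw [Finset.card_filter])
      _ = ∑ j ∈ S, ∑ i ∈ Finset.Icc 1 I, (if 2 ^ i ≤ f j then 1 else 0) := Finset.sum_comm
      _ = ∑ j ∈ S, ((Finset.Icc 1 I).filter (fun i => 2 ^ i ≤ f j)).card := by
          exact Finset.sum_congr rfl (fun j _ => by rw [Finset.card_filter])
      _ ≤ ∑ j ∈ S, Nat.log 2 (f j) := Finset.sum_le_sum step1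
  have step3 : ∀ i ∈ Finset.Icc 1 I, p - 8 * 4 ^ i ≤ (S.filter (fun j => 2 ^ i ≤ f j)).card := by
    intro i hi
    simp only [Finset.mem_Icc] at hi
    have h2i : 2 ≤ 2 ^ i := by
      calc (2:ℕ) = 2^1 := rfl
        _ ≤ 2^i := Nat.pow_le_pow_right (by norm_num) hi.1
    have heq : S.filter (fun j => ¬ f j ≤ 2 ^ i - 1) = S.filter (fun j => 2 ^ i ≤ f j) := by
      refine Finset.filter_congr (fun j _ => ?_)
      constructor <;> intro hh <;> omega
    have hsplit := Finset.card_filter_add_card_filter_not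
      (s := S) (p := fun j => f j ≤ 2 ^ i - 1)
    rw [heq, hcard] at hsplit
    have hc := hcount (2 ^ i - 1) (by omega)
    have hsq : (2 ^ i - 1) ^ 2 ≤ 4 ^ i := by
      have h1 : (2 ^ i - 1) ^ 2 ≤ (2 ^ i) ^ 2 := Nat.pow_le_pow_left (by omega) 2
      have h2 : ((2:ℕ) ^ i) ^ 2 = 4 ^ i := by
        rw [← pow_mul, mul_comm i 2, pow_mul]; norm_num
      omega
    omega
  have step4 : (I - 1) * p ≤ ∑ i ∈ Finset.Icc 1 I, (p - 8 * 4 ^ i) := by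
    have hds : ∑ i ∈ Finset.Icc 1 I, (p - 8 * 4 ^ i)
        = (∑ _i ∈ Finset.Icc 1 I, p) - ∑ i ∈ Finset.Icc 1 I, 8 * 4 ^ i := by
      refine Finset.sum_tsub_distrib _ ?_
      intro i hi
      simp only [Finset.mem_Icc] at hi
      have : (4:ℕ) ^ i ≤ 4 ^ I := Nat.pow_le_pow_right (by norm_num) hi.2
      omega
    rw [hds, Finset.sum_const, Nat.card_Icc, smul_eq_mul]
    simp only [Nat.add_sub_cancel]
    have hg := geomsum I
    have h1 : ∑ i ∈ Finset.Icc 1 I, 8 * 4 ^ i ≤ p := by omega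
    calc (I - 1) * p = I * p - p := by rw [Nat.sub_mul, one_mul]
      _ ≤ I * p - ∑ i ∈ Finset.Icc 1 I, 8 * 4 ^ i := Nat.sub_le_sub_left h1 _
  have step5 : (I - 1) * p ≤ ∑ j ∈ S, Nat.log 2 (f j) :=
    le_trans (le_trans step4 (Finset.sum_le_sum step3)) step2
  calc 2 ^ ((I - 1) * p) ≤ 2 ^ (∑ j ∈ S, Nat.log 2 (f j)) :=
        Nat.pow_le_pow_right (by norm_num) step5
    _ = ∏ j ∈ S, 2 ^ Nat.log 2 (f j) := by rw [Finset.prod_pow_eq_pow_sum]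
    _ ≤ ∏ j ∈ S, f j := Finset.prod_le_prod' (fun j hj =>
        Nat.pow_log_le_self 2 (by have := hf1 j hj; omega))

lemma divDiff_formula (η : ℕ → ℂ) (hinj : Function.Injective η) (h : ℂ → ℂ) :
    ∀ p : ℕ, ∀ w : ℂ, (∀ j < p, w ≠ η j) →
    divDiff (((List.range p).reverse).map η) h w
      = (∑ j ∈ Finset.range p,
          h (η j) * ((η j - w) * ∏ k ∈ (Finset.range p).erase j, (η j - η k))⁻¹)
        + h w * (∏ k ∈ Finset.range p, (w - η k))⁻¹ := by
  intro p
  induction p with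
  | zero => intro w _; simp [divDiff]
  | succ p IH =>
    intro w hw
    have hlist : ((List.range (p+1)).reverse).map η
        = η p :: ((List.range p).reverse).map η := by
      simp [List.range_succ]
    have hwp : w ≠ η p := hw p (Nat.lt_succ_self p)
    have hwj : ∀ j < p, w ≠ η j := fun j hj => hw j (Nat.lt_succ_of_lt hj)
    have hpj : ∀ j < p, η p ≠ η j := fun j hj hEq =>
      (by have := hinj hEq; omega : False)
    rw [hlist, divDiff, IH w hwj, IH (η p) hpj]
    have hQ : ∀ j ∈ Finset.range p, (∏ k ∈ (Finset.range p).erase j, (η j - η k)) ≠ 0 := by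
      intro j hj
      refine Finset.prod_ne_zero_iff.mpr ?_
      intro k hk
      exact sub_ne_zero.mpr (fun hEq => (Finset.mem_erase.mp hk).1 (hinj hEq).symm)
    have hBw : (∏ k ∈ Finset.range p, (w - η k)) ≠ 0 := by
      refine Finset.prod_ne_zero_iff.mpr ?_
      intro k hk
      exact sub_ne_zero.mpr (hwj k (Finset.mem_range.mp hk))
    have hBp : (∏ k ∈ Finset.range p, (η p - η k)) ≠ 0 := by
      refine Finset.prod_ne_zero_iff.mpr ?_
      intro k hk
      exact sub_ne_zero.mpr (hpj k (Finset.mem_range.mp hk))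
    have hwp' : w - η p ≠ 0 := sub_ne_zero.mpr hwp
    -- RHS decomposition
    rw [Finset.range_add_one, Finset.sum_insert Finset.notMem_range_self,
        Finset.prod_insert Finset.notMem_range_self,
        Finset.erase_insert Finset.notMem_range_self]
    have herase : ∀ j ∈ Finset.range p,
        (insert p (Finset.range p)).erase j = insert p ((Finset.range p).erase j) := by
      intro j hj
      exact Finset.erase_insert_of_ne (fun hEq => Finset.notMem_range_self (hEq ▸ hj))
    have hR : ∑ x ∈ Finset.range p,
          h (η x) * ((η x - w) * ∏ k ∈ (insert p (Finset.range p)).erase x, (η x - η k))⁻¹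
        = ∑ x ∈ Finset.range p,
          h (η x) * ((η x - w) * ((η x - η p) * ∏ k ∈ (Finset.range p).erase x, (η x - η k)))⁻¹ := by
      refine Finset.sum_congr rfl (fun j hj => ?_)
      rw [herase j hj, Finset.prod_insert (fun hmem =>
        Finset.notMem_range_self (Finset.mem_of_mem_erase hmem))]
    rw [hR, div_eq_iff hwp', add_mul, add_mul]
    have hsum : (∑ x ∈ Finset.range p,
          h (η x) * ((η x - w) * ((η x - η p) * ∏ k ∈ (Finset.range p).erase x, (η x - η k)))⁻¹) * (w - η p)
        = ∑ x ∈ Finset.range p,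
          (h (η x) * ((η x - w) * ∏ k ∈ (Finset.range p).erase x, (η x - η k))⁻¹
            - h (η x) * ((η x - η p) * ∏ k ∈ (Finset.range p).erase x, (η x - η k))⁻¹) := by
      rw [Finset.sum_mul]
      refine Finset.sum_congr rfl (fun j hj => ?_)
      have hjw : η j - w ≠ 0 := sub_ne_zero.mpr fun hEq => hwj j (Finset.mem_range.mp hj) hEq.symm
      have hjp : η j - η p ≠ 0 := sub_ne_zero.mpr fun hEq => hpj j (Finset.mem_range.mp hj) hEq.symm
      have hQj := hQ j hj
      field_simp
      ring
    have hterm1 : h (η p) * ((η p - w) * ∏ k ∈ Finset.range p, (η p - η k))⁻¹ * (w - η p)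
        = -(h (η p) * (∏ k ∈ Finset.range p, (η p - η k))⁻¹) := by
      have hpw : η p - w ≠ 0 := sub_ne_zero.mpr (fun hEq => hwp hEq.symm)
      field_simp
      ring
    have hterm2 : h w * ((w - η p) * ∏ x ∈ Finset.range p, (w - η x))⁻¹ * (w - η p)
        = h w * (∏ k ∈ Finset.range p, (w - η k))⁻¹ := by
      field_simp
    rw [hsum, hterm1, hterm2, Finset.sum_sub_distrib]
    ring

lemma dist_prod_lower (η : ℕ → ℂ) (hinj : Function.Injective η)
    (hfirst : ∀ r : ℕ, ∀ j < (2 ^ r + 1) ^ 2, η j ∈ Anet r)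
    (p q : ℕ) (hq : q ∈ Finset.range (p+1)) :
    ((1:ℝ)/32) ^ p ≤ ∏ k ∈ (Finset.range (p+1)).erase q, ‖η q - η k‖ := by
  rcases Nat.eq_zero_or_pos p with hp0 | hp1
  · subst hp0
    have hq0 : q = 0 := by simpa using hq
    subst hq0
    simp
  set r := Nat.clog 4 p with hr
  have hple : p ≤ 4 ^ r := Nat.le_pow_clog (by norm_num) p
  have h4r : 4 ^ r ≤ 4 * p := by
    rcases Nat.eq_zero_or_pos r with h0 | h1
    · rw [h0]; omega
    · have h2 : 1 < p := by
        by_contra hc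
        have : p = 1 := by omega
        rw [this] at hr
        simp [Nat.clog] at hr
        omega
      have hth := Nat.pow_pred_clog_lt_self (b := 4) (by norm_num) h2
      rw [← hr, Nat.pred_eq_sub_one] at hth
      have h3 : (4:ℕ) ^ r = 4 * 4 ^ (r - 1) := by
        rw [← pow_succ']
        congr 1
        omega
      omega
  -- coordinates
  have hex : ∀ j, ∃ s t : ℕ, j ≤ p →
      (s ≤ 2^r ∧ t ≤ 2^r ∧ η j = ((s:ℂ) + (t:ℂ) * Complex.I) / ((2:ℂ)^r)) := by
    intro j
    by_cases hj : j ≤ p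
    · have hjlt : j < (2 ^ r + 1) ^ 2 := by
        have h1 : ((2:ℕ)^r)^2 = 4^r := by
          rw [← pow_mul, mul_comm r 2, pow_mul]; norm_num
        have h2 : (2^r+1)^2 = (2^r)^2 + 2*2^r + 1 := by ring
        omega
      obtain ⟨s, t, hs, ht, hst⟩ := hfirst r j hjlt
      exact ⟨s, t, fun _ => ⟨hs, ht, hst⟩⟩
    · exact ⟨0, 0, fun h => absurd h hj⟩
  choose s t hst using hex
  have h2rpos : (0:ℝ) < 2 ^ r := by positivity
  have hre : ∀ j ≤ p, (η j).re = (s j : ℝ) / 2 ^ r ∧ (η j).im = (t j : ℝ) / 2 ^ r := by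
    intro j hj
    obtain ⟨_, _, hη⟩ := hst j hj
    rw [hη]
    have hcast : ((2:ℂ)^r) = (((2:ℝ)^r : ℝ) : ℂ) := by push_cast; ring
    rw [hcast]
    constructor
    · rw [Complex.div_ofReal_re]; simp
    · rw [Complex.div_ofReal_im]; simp
  -- the Chebyshev distance function
  set T := (Finset.range (p+1)).erase q with hT
  have hqle : q ≤ p := Nat.lt_succ_iff.mp (Finset.mem_range.mp hq)
  set f : ℕ → ℕ := fun k => max ((s q : ℤ) - s k).natAbs ((t q : ℤ) - t k).natAbs with hf
  have hmemT : ∀ k ∈ T, k ≤ p ∧ k ≠ q := by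
    intro k hk
    rw [hT, Finset.mem_erase, Finset.mem_range] at hk
    exact ⟨Nat.lt_succ_iff.mp hk.2, hk.1⟩
  have hηeq : ∀ j ≤ p, ∀ k ≤ p, s j = s k → t j = t k → j = k := by
    intro j hj k hk hs' ht'
    apply hinj
    rw [(hst j hj).2.2, (hst k hk).2.2, hs', ht']
  have hf1 : ∀ k ∈ T, 1 ≤ f k := by
    intro k hk
    obtain ⟨hkp, hkq⟩ := hmemT k hk
    by_contra hc
    push_neg at hc
    rw [hf] at hc
    obtain ⟨hc1, hc2⟩ := Nat.max_lt.mp hc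
    have h1 : s q = s k ∧ t q = t k := by omega
    exact hkq (hηeq k hkp q hqle h1.1.symm h1.2.symm)
  have hcardT : T.card = p := by
    rw [hT, Finset.card_erase_of_mem hq, Finset.card_range]
    omega
  -- counting
  have hcount : ∀ k : ℕ, 1 ≤ k → ((T.filter (fun j => f j ≤ k)).card ≤ 8 * k ^ 2) := by
    intro k hk
    have hinjOn : ∀ j1 ∈ T.filter (fun j => f j ≤ k), ∀ j2 ∈ T.filter (fun j => f j ≤ k),
        (((s j1 : ℤ) - s q, (t j1 : ℤ) - t q) : ℤ × ℤ) = ((s j2 : ℤ) - s q, (t j2 : ℤ) - t q)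
          → j1 = j2 := by
      intro j1 hj1 j2 hj2 heq
      obtain ⟨hj1T, -⟩ := Finset.mem_filter.mp hj1
      obtain ⟨hj2T, -⟩ := Finset.mem_filter.mp hj2
      rw [Prod.mk.injEq] at heq
      exact hηeq j1 (hmemT j1 hj1T).1 j2 (hmemT j2 hj2T).1 (by omega) (by omega)
    have hmaps : ∀ j ∈ T.filter (fun j => f j ≤ k),
        (((s j : ℤ) - s q, (t j : ℤ) - t q) : ℤ × ℤ)
          ∈ ((Finset.Icc (-(k:ℤ)) k ×ˢ Finset.Icc (-(k:ℤ)) k).erase (0, 0)) := by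
      intro j hj
      obtain ⟨hjT, hjf⟩ := Finset.mem_filter.mp hj
      have hf1j := hf1 j hjT
      rw [hf] at hjf hf1j
      simp only [max_le_iff] at hjf
      have hpos := le_max_iff.mp hf1j
      rw [Finset.mem_erase, Finset.mem_product, Finset.mem_Icc, Finset.mem_Icc]
      refine ⟨?_, ⟨?_, ?_⟩, ?_, ?_⟩
      · intro hc
        rw [Prod.mk.injEq] at hc
        omega
      all_goals omega
    have hcard2 := Finset.card_le_card_of_injOn _ hmaps hinjOn
    have hcardsq : ((Finset.Icc (-(k:ℤ)) k ×ˢ Finset.Icc (-(k:ℤ)) k).erase ((0:ℤ), (0:ℤ))).card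
        = (2*k+1) * (2*k+1) - 1 := by
      rw [Finset.card_erase_of_mem (by simp)]
      rw [Finset.card_product, Int.card_Icc]
      have ht : ((k:ℤ) + 1 - (-(k:ℤ))).toNat = 2*k+1 := by omega
      rw [ht]
    rw [hcardsq] at hcard2
    have e : (2*k+1)*(2*k+1) = 4*(k*k)+4*k+1 := by ring
    have e2 : k * 1 ≤ k * k := Nat.mul_le_mul_left k hk
    have e3 : k ^ 2 = k * k := sq k
    omega
  -- distance lower bound per point
  have hdist : ∀ k ∈ T, (f k : ℝ) / 2 ^ r ≤ ‖η q - η k‖ := by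
    intro k hk
    obtain ⟨hkp, -⟩ := hmemT k hk
    have hreq := hre q hqle
    have hrek := hre k hkp
    have h1 : |(η q - η k).re| ≤ ‖η q - η k‖ := Complex.abs_re_le_norm _
    have h2 : |(η q - η k).im| ≤ ‖η q - η k‖ := Complex.abs_im_le_norm _
    rw [Complex.sub_re, hreq.1, hrek.1] at h1
    rw [Complex.sub_im, hreq.2, hrek.2] at h2
    rw [div_sub_div_same, abs_div, abs_of_pos h2rpos] at h1 h2
    have hfk : f k = max ((s q : ℤ) - s k).natAbs ((t q : ℤ) - t k).natAbs := rfl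
    rw [hfk]
    rcases max_cases ((s q : ℤ) - s k).natAbs ((t q : ℤ) - t k).natAbs with ⟨hm, _⟩ | ⟨hm, _⟩
    · rw [hm]
      refine le_trans (le_of_eq ?_) h1
      congr 1
      rw [Nat.cast_natAbs]
      push_cast
      ring_nf
    · rw [hm]
      refine le_trans (le_of_eq ?_) h2
      congr 1
      rw [Nat.cast_natAbs]
      push_cast
      ring_nf
  -- get c with 2^r ≤ 32*c and c^p ≤ ∏ f
  have hc : ∃ c : ℕ, 1 ≤ c ∧ 2 ^ r ≤ 32 * c ∧ c ^ p ≤ ∏ k ∈ T, f k := by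
    rcases le_or_gt 64 p with hbig | hsmall
    · obtain ⟨hIge, hprod⟩ := prod_lower T f p hcardT hbig hf1 hcount
      set I := Nat.log 4 (p / 16) with hI
      refine ⟨2 ^ (I - 1), Nat.one_le_two_pow, ?_, by rw [← pow_mul]; exact hprod⟩
      have hI1 : 1 ≤ I := by
        rw [hI]
        exact (Nat.le_log_iff_pow_le (by norm_num) (show p/16 ≠ 0 by omega)).mpr
          (by simpa using (show 4 ≤ p/16 by omega))
      have hsq : ((2:ℕ) ^ r) ^ 2 ≤ (32 * 2 ^ (I - 1)) ^ 2 := by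
        have e1 : ((2:ℕ)^r)^2 = 4^r := by rw [← pow_mul, mul_comm r 2, pow_mul]; norm_num
        have e2 : ((32:ℕ) * 2 ^ (I-1))^2 = 1024 * 4 ^ (I-1) := by
          rw [mul_pow, ← pow_mul, mul_comm (I-1) 2, pow_mul]; norm_num
        have e3 : (4:ℕ) ^ I = 4 * 4 ^ (I - 1) := by
          rw [← pow_succ']; congr 1; omega
        omega
      exact (Nat.pow_le_pow_iff_left (by norm_num)).mp hsq
    · refine ⟨1, le_refl 1, ?_, ?_⟩
      · have : (4:ℕ)^r ≤ 4 * p := h4r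
        have h252 : (4:ℕ)^r ≤ 252 := by omega
        have hr3 : r ≤ 3 := by
          by_contra hcon
          push_neg at hcon
          have : (4:ℕ)^4 ≤ 4^r := Nat.pow_le_pow_right (by norm_num) hcon
          norm_num at this
          omega
        have : (2:ℕ)^r ≤ 2^3 := Nat.pow_le_pow_right (by norm_num) hr3
        omega
      · rw [one_pow]
        exact Finset.one_le_prod' hf1
  obtain ⟨c, hc1, hc2, hc3⟩ := hc
  -- final real computation
  have step1 : ((c:ℝ) ^ p) / (2^r) ^ p ≤ ∏ k ∈ T, ‖η q - η k‖ := by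
    calc ((c:ℝ) ^ p) / (2^r) ^ p ≤ ((∏ k ∈ T, f k : ℕ) : ℝ) / (2^r)^p := by
          have hcast : ((c:ℝ))^p ≤ ((∏ k ∈ T, f k : ℕ) : ℝ) := by exact_mod_cast hc3
          exact (div_le_div_iff_of_pos_right (by positivity)).mpr hcast
      _ = ∏ k ∈ T, ((f k : ℝ) / 2 ^ r) := by
          rw [Finset.prod_div_distrib, Finset.prod_const, hcardT]
          push_cast
          ring
      _ ≤ ∏ k ∈ T, ‖η q - η k‖ :=
          Finset.prod_le_prod (fun k hk => by positivity) hdist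
  refine le_trans ?_ step1
  rw [div_pow, one_pow]
  rw [div_le_div_iff₀ (by norm_num) (by positivity)]
  calc (1:ℝ) * ((2:ℝ)^r)^p = ((2^r : ℕ) : ℝ)^p := by push_cast; ring
    _ ≤ ((32 * c : ℕ) : ℝ)^p := by
        apply pow_le_pow_left₀ (by positivity)
        exact_mod_cast hc2
    _ = (c:ℝ)^p * 32^p := by push_cast; ring

lemma deltaP_formula (η : ℕ → ℂ) (hinj : Function.Injective η) (h : ℂ → ℂ) (p : ℕ) :
    deltaP η h p = ∑ j ∈ Finset.range (p+1),
      h (η j) * (∏ k ∈ (Finset.range (p+1)).erase j, (η j - η k))⁻¹ := by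
  have hpj : ∀ j < p, η p ≠ η j := fun j hj hEq => (by have := hinj hEq; omega : False)
  rw [deltaP, divDiff_formula η hinj h p (η p) hpj]
  rw [Finset.range_add_one, Finset.sum_insert Finset.notMem_range_self,
      Finset.erase_insert Finset.notMem_range_self, add_comm]
  congr 1
  refine Finset.sum_congr rfl (fun j hj => ?_)
  rw [Finset.erase_insert_of_ne (fun hEq => Finset.notMem_range_self (hEq ▸ hj)),
      Finset.prod_insert (fun hmem => Finset.notMem_range_self (Finset.mem_of_mem_erase hmem))]


/-- Lemma: bound on divided differences of any bounded function
for the square sequence. -/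
theorem stmt12 (η : ℕ → ℂ) (hinj : Function.Injective η)
    (hrange : Set.range η = ⋃ r, Anet r)
    (hfirst : ∀ r : ℕ, ∀ j < (2 ^ r + 1) ^ 2, η j ∈ Anet r) :
    ∃ R : ℝ, 0 < R ∧ ∀ (h : ℂ → ℂ) (M : ℝ), (∀ j, ‖h (η j)‖ ≤ M) →
      ∀ p : ℕ, ‖deltaP η h p‖ ≤ M * R ^ p := by
  refine ⟨64, by norm_num, ?_⟩
  intro h M hM p
  have hM0 : 0 ≤ M := le_trans (norm_nonneg _) (hM 0)
  rw [deltaP_formula η hinj h p]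
  have hterm : ∀ j ∈ Finset.range (p+1),
      ‖h (η j) * (∏ k ∈ (Finset.range (p+1)).erase j, (η j - η k))⁻¹‖ ≤ M * 32 ^ p := by
    intro j hj
    have hprod := dist_prod_lower η hinj hfirst p j hj
    have hprodpos : (0:ℝ) < ((1:ℝ)/32) ^ p := by positivity
    rw [norm_mul, norm_inv, norm_prod]
    refine mul_le_mul (hM j) ?_ (by positivity) hM0
    have hle : (∏ k ∈ (Finset.range (p+1)).erase j, ‖η j - η k‖)⁻¹ ≤ (((1:ℝ)/32) ^ p)⁻¹ :=
      inv_anti₀ hprodpos hprod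
    calc (∏ k ∈ (Finset.range (p+1)).erase j, ‖η j - η k‖)⁻¹ ≤ (((1:ℝ)/32) ^ p)⁻¹ := hle
      _ = 32 ^ p := by rw [← inv_pow]; norm_num
  calc ‖∑ j ∈ Finset.range (p+1),
        h (η j) * (∏ k ∈ (Finset.range (p+1)).erase j, (η j - η k))⁻¹‖
      ≤ ∑ j ∈ Finset.range (p+1),
        ‖h (η j) * (∏ k ∈ (Finset.range (p+1)).erase j, (η j - η k))⁻¹‖ := norm_sum_le _ _
    _ ≤ ∑ _j ∈ Finset.range (p+1), M * 32 ^ p := Finset.sum_le_sum hterm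
    _ = (p+1 : ℝ) * (M * 32 ^ p) := by rw [Finset.sum_const, Finset.card_range]; push_cast; ring
    _ ≤ M * 64 ^ p := by
        have h2p : (p+1 : ℝ) ≤ 2 ^ p := by
          exact_mod_cast Nat.succ_le_of_lt Nat.lt_two_pow_self
        have h64 : ((64:ℝ)) ^ p = 2 ^ p * 32 ^ p := by
          rw [← mul_pow]; norm_num
        rw [h64]
        have : (p+1:ℝ) * 32 ^ p ≤ 2 ^ p * 32 ^ p :=
          mul_le_mul_of_nonneg_right h2p (by positivity)
        calc (p+1 : ℝ) * (M * 32 ^ p) = M * ((p+1) * 32 ^ p) := by ring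
          _ ≤ M * (2 ^ p * 32 ^ p) := mul_le_mul_of_nonneg_left this hM0
end

section
/- Let (θ_j)_{j≥1} be a bounded sequence of pairwise distinct complex numbers and (κ_j)_{j≥1} a sequence of pairwise distinct complex numbers satisfying condition (1.2), with dist({θ_j : j≥1}, {κ_j : j≥1}) > 0. Define η by η_{2k} := θ_k and η_{2k−1} := κ_k for k ≥ 1. Then there exists a bijection σ₁ of the positive integers such that the sequence (η_{σ₁(j)})_{j≥1} satisfies condition (1.2). -/
open Complex Filter Finset Topology

noncomputable def symDD (s : Finset ℂ) (h : ℂ → ℂ) : ℂ :=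
  ∑ x ∈ s, h x * (∏ y ∈ s.erase x, (x - y))⁻¹

lemma symDD_rec (S : Finset ℂ) (h : ℂ → ℂ) {u v : ℂ} (hu : u ∉ S) (hv : v ∉ S)
    (huv : u ≠ v) :
    symDD (insert u (insert v S)) h = (symDD (insert u S) h - symDD (insert v S) h) / (u - v) := by
  have huv' : u - v ≠ 0 := sub_ne_zero.2 huv
  have hvu' : v - u ≠ 0 := sub_ne_zero.2 (Ne.symm huv)
  rw [eq_div_iff huv']
  have hvU : v ∉ insert u S := by simp [Ne.symm huv, hv]
  have huV : u ∉ insert v S := by simp [huv, hu]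
  unfold symDD
  rw [Finset.sum_insert huV, Finset.sum_insert hv, Finset.sum_insert hu, Finset.sum_insert hv,
    Finset.erase_insert huV, Finset.erase_insert hu, Finset.erase_insert hv]
  rw [add_mul, add_mul, Finset.sum_mul]
  have h1 : h u * (∏ y ∈ insert v S, (u - y))⁻¹ * (u - v) = h u * (∏ y ∈ S, (u - y))⁻¹ := by
    rw [Finset.prod_insert hv, mul_inv]
    have : h u * ((u - v)⁻¹ * (∏ y ∈ S, (u - y))⁻¹) * (u - v)
        = h u * (∏ y ∈ S, (u - y))⁻¹ * ((u - v)⁻¹ * (u - v)) := by ring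
    rw [this, inv_mul_cancel₀ huv', mul_one]
  have h2 : h v * (∏ y ∈ (insert u (insert v S)).erase v, (v - y))⁻¹ * (u - v)
      = -(h v * (∏ y ∈ S, (v - y))⁻¹) := by
    have he : (insert u (insert v S)).erase v = insert u S := by
      rw [Finset.erase_insert_of_ne huv, Finset.erase_insert hv]
    rw [he, Finset.prod_insert hu, mul_inv]
    have : h v * ((v - u)⁻¹ * (∏ y ∈ S, (v - y))⁻¹) * (u - v)
        = -(h v * (∏ y ∈ S, (v - y))⁻¹ * ((v - u)⁻¹ * (v - u))) := by ring
    rw [this, inv_mul_cancel₀ hvu', mul_one]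
  have key : ∀ x ∈ S,
      h x * (∏ y ∈ (insert u (insert v S)).erase x, (x - y))⁻¹ * (u - v)
      = h x * (∏ y ∈ (insert u S).erase x, (x - y))⁻¹
        - h x * (∏ y ∈ (insert v S).erase x, (x - y))⁻¹ := by
    intro x hx
    have hxu : x ≠ u := fun e => hu (e ▸ hx)
    have hxv : x ≠ v := fun e => hv (e ▸ hx)
    have hunotex : u ∉ S.erase x := fun hc => hu (Finset.mem_of_mem_erase hc)
    have hvnotex : v ∉ S.erase x := fun hc => hv (Finset.mem_of_mem_erase hc)
    have h1' : (insert u (insert v S)).erase x = insert u (insert v (S.erase x)) := by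
      rw [Finset.erase_insert_of_ne hxu.symm, Finset.erase_insert_of_ne hxv.symm]
    have h2' : (insert u S).erase x = insert u (S.erase x) := by
      rw [Finset.erase_insert_of_ne hxu.symm]
    have h3' : (insert v S).erase x = insert v (S.erase x) := by
      rw [Finset.erase_insert_of_ne hxv.symm]
    rw [h1', h2', h3', Finset.prod_insert (by simp [huv, hunotex] : u ∉ insert v (S.erase x)),
      Finset.prod_insert hvnotex, Finset.prod_insert hunotex]
    have hxu' : x - u ≠ 0 := sub_ne_zero.2 hxu
    have hxv' : x - v ≠ 0 := sub_ne_zero.2 hxv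
    rcases eq_or_ne (∏ y ∈ S.erase x, (x - y)) 0 with hP | hP
    · simp [hP]
    · field_simp
      ring
  rw [Finset.sum_congr rfl key, Finset.sum_sub_distrib, h1, h2]
  ring

lemma divDiff_eq_symDD : ∀ (l : List ℂ) (h : ℂ → ℂ) (w : ℂ), l.Nodup → w ∉ l →
    divDiff l h w = symDD (insert w l.toFinset) h
  | [], h, w, _, _ => by simp [divDiff, symDD]
  | a :: l, h, w, hnd, hw => by
    have hal : a ∉ l := (List.nodup_cons.1 hnd).1
    have hnd' : l.Nodup := (List.nodup_cons.1 hnd).2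
    have hwl : w ∉ l := fun hc => hw (List.mem_cons_of_mem _ hc)
    have hwa : w ≠ a := fun e => hw (e ▸ (List.mem_cons_self : a ∈ a :: l))
    have haF : a ∉ l.toFinset := by simpa using hal
    have hwF : w ∉ l.toFinset := by simpa using hwl
    rw [show divDiff (a :: l) h w = (divDiff l h w - divDiff l h a) / (w - a) from rfl,
      divDiff_eq_symDD l h w hnd' hwl, divDiff_eq_symDD l h a hnd' hal,
      ← symDD_rec l.toFinset h hwF haF hwa]
    congr 1
    simp

lemma deltaP_eq_symDD (x : ℕ → ℂ) (hx : Function.Injective x) (h : ℂ → ℂ) (p : ℕ) :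
    deltaP x h p = symDD (Finset.image x (Finset.range (p + 1))) h := by
  have hnd : (((List.range p).reverse).map x).Nodup :=
    (List.nodup_reverse.2 (List.nodup_range : (List.range p).Nodup)).map hx
  have hw : x p ∉ ((List.range p).reverse).map x := by
    intro hc
    rcases List.mem_map.1 hc with ⟨j, hj, hje⟩
    have : j < p := by simpa using List.mem_reverse.1 hj
    exact absurd (hx hje) this.ne
  rw [deltaP, divDiff_eq_symDD _ _ _ hnd hw]
  congr 1
  ext z
  simp only [Finset.mem_insert, List.mem_toFinset, List.mem_map, List.mem_reverse,
    List.mem_range, Finset.mem_image, Finset.mem_range, Nat.lt_succ_iff_lt_or_eq]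
  constructor
  · rintro (rfl | ⟨j, hj, rfl⟩)
    · exact ⟨p, Or.inr rfl, rfl⟩
    · exact ⟨j, Or.inl hj, rfl⟩
  · rintro ⟨j, hj | rfl, rfl⟩
    · exact Or.inr ⟨j, hj, rfl⟩
    · exact Or.inl rfl

noncomputable def hqF (q : ℕ) : ℂ → ℂ :=
  fun ζ => ((starRingEnd ℂ) ζ / (1 + (Complex.normSq ζ : ℂ))) ^ q

noncomputable def LamDD (s : Finset ℂ) : ℝ := ∑ x ∈ s, (∏ y ∈ s.erase x, ‖x - y‖)⁻¹

noncomputable def CstDD (θ : ℕ → ℂ) (k : ℕ) : ℝ :=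
  1 + ∑ j ∈ Finset.range (k + 1), LamDD (Finset.image θ (Finset.range j))

lemma LamDD_nonneg (s : Finset ℂ) : 0 ≤ LamDD s := by
  apply Finset.sum_nonneg
  intro x _
  positivity

lemma one_le_CstDD (θ : ℕ → ℂ) (k : ℕ) : 1 ≤ CstDD θ k := by
  have := Finset.sum_nonneg (fun j (_ : j ∈ Finset.range (k+1)) =>
    LamDD_nonneg (Finset.image θ (Finset.range j)))
  unfold CstDD; linarith

lemma CstDD_mono (θ : ℕ → ℂ) {k k' : ℕ} (h : k ≤ k') : CstDD θ k ≤ CstDD θ k' := by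
  unfold CstDD
  have : ∀ j ∈ Finset.range (k'+1), 0 ≤ LamDD (Finset.image θ (Finset.range j)) :=
    fun j _ => LamDD_nonneg _
  have hsub : Finset.range (k+1) ⊆ Finset.range (k'+1) :=
    Finset.range_subset_range.2 (by omega)
  have := Finset.sum_le_sum_of_subset_of_nonneg (f := fun j => LamDD (Finset.image θ (Finset.range j))) hsub (fun j hj _ => LamDD_nonneg _)
  linarith

lemma LamDD_le_CstDD (θ : ℕ → ℂ) (k : ℕ) : LamDD (Finset.image θ (Finset.range k)) ≤ CstDD θ k := by
  have h := Finset.single_le_sum (f := fun j => LamDD (Finset.image θ (Finset.range j)))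
    (fun j (_ : j ∈ Finset.range (k+1)) => LamDD_nonneg _)
    (Finset.self_mem_range_succ k)
  unfold CstDD; linarith

lemma hqF_norm_le_one (q : ℕ) (ζ : ℂ) : ‖hqF q ζ‖ ≤ 1 := by
  unfold hqF
  rw [norm_pow]
  apply pow_le_one₀ (norm_nonneg _)
  rw [norm_div]
  have h1 : ‖(starRingEnd ℂ) ζ‖ = ‖ζ‖ := RCLike.norm_conj ζ
  have h3 : ‖(1 : ℂ) + (Complex.normSq ζ : ℂ)‖ = 1 + Complex.normSq ζ := by
    have h2 : (1 : ℂ) + (Complex.normSq ζ : ℂ) = ((1 + Complex.normSq ζ : ℝ) : ℂ) := by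
      push_cast; ring
    rw [h2, Complex.norm_real, Real.norm_eq_abs,
      abs_of_pos (by nlinarith [Complex.normSq_nonneg ζ] : (0:ℝ) < 1 + Complex.normSq ζ)]
  rw [h1, h3]
  rw [div_le_one (by nlinarith [Complex.normSq_nonneg ζ])]
  have : Complex.normSq ζ = ‖ζ‖ ^ 2 := by
    rw [Complex.normSq_eq_norm_sq]
  nlinarith [norm_nonneg ζ]

lemma symDD_norm_le (s : Finset ℂ) (h : ℂ → ℂ) (hb : ∀ x ∈ s, ‖h x‖ ≤ 1) :
    ‖symDD s h‖ ≤ LamDD s := by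
  unfold symDD LamDD
  refine (norm_sum_le _ _).trans (Finset.sum_le_sum ?_)
  intro x hx
  rw [norm_mul, norm_inv, norm_prod]
  calc ‖h x‖ * (∏ y ∈ s.erase x, ‖x - y‖)⁻¹
      ≤ 1 * (∏ y ∈ s.erase x, ‖x - y‖)⁻¹ := by
        apply mul_le_mul_of_nonneg_right (hb x hx); positivity
    _ = (∏ y ∈ s.erase x, ‖x - y‖)⁻¹ := one_mul _

lemma mainEst (θ κ : ℕ → ℂ) (d R : ℝ) (hd0 : 0 < d) (hd1 : d ≤ 1) (hR : 1 ≤ R)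
    (hsep : ∀ i j, d ≤ ‖θ i - κ j‖)
    (hθinj : Function.Injective θ) (hκinj : Function.Injective κ)
    (hκb : ∀ m q : ℕ, ‖symDD (Finset.image κ (Finset.range (m + 1))) (hqF q)‖ ≤ R ^ (m + q)) :
    ∀ q k m : ℕ,
      ‖symDD (Finset.image κ (Finset.range m) ∪ Finset.image θ (Finset.range k)) (hqF q)‖
        ≤ (2 * (R + 1) / d) ^ (m + k + q) * CstDD θ k := by
  intro q
  set A : ℝ := 2 * (R + 1) / d with hA
  have hA1 : 1 ≤ A := by
    rw [hA, le_div_iff₀ hd0]; nlinarith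
  have hA2d : 2 / d ≤ A := by
    rw [hA]
    apply div_le_div_of_nonneg_right ?h hd0.le
    case h => linarith
  have hRA : R ≤ A := by
    rw [hA, le_div_iff₀ hd0]; nlinarith
  have hθκ : ∀ i j, θ i ≠ κ j := by
    intro i j hc
    have := hsep i j
    rw [hc, sub_self, norm_zero] at this
    linarith
  intro k
  induction k with
  | zero =>
    intro m
    have hC0 : CstDD θ 0 = 1 := by
      unfold CstDD
      simp [LamDD]
    rw [hC0, mul_one]
    simp only [Finset.range_zero, Finset.image_empty, Finset.union_empty]
    match m with
    | 0 =>
      simp only [Finset.range_zero, Finset.image_empty]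
      have : symDD (∅ : Finset ℂ) (hqF q) = 0 := by simp [symDD]
      rw [this, norm_zero]
      positivity
    | m + 1 =>
      calc ‖symDD (Finset.image κ (Finset.range (m + 1))) (hqF q)‖
          ≤ R ^ (m + q) := hκb m q
        _ ≤ A ^ (m + q) := pow_le_pow_left₀ (by linarith) hRA _
        _ ≤ A ^ (m + 1 + 0 + q) := pow_le_pow_right₀ hA1 (by omega)
  | succ k ih =>
    intro m
    induction m with
    | zero =>
      simp only [Finset.range_zero, Finset.image_empty, Finset.empty_union]
      calc ‖symDD (Finset.image θ (Finset.range (k + 1))) (hqF q)‖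
          ≤ LamDD (Finset.image θ (Finset.range (k + 1))) :=
            symDD_norm_le _ _ (fun x _ => hqF_norm_le_one q x)
        _ ≤ CstDD θ (k + 1) := LamDD_le_CstDD θ (k + 1)
        _ ≤ A ^ (0 + (k + 1) + q) * CstDD θ (k + 1) := by
            nlinarith [one_le_pow₀ hA1 (n := 0 + (k + 1) + q), one_le_CstDD θ (k + 1)]
    | succ m ihm =>
      set S : Finset ℂ := Finset.image κ (Finset.range m) ∪ Finset.image θ (Finset.range k)
        with hS
      have hu : κ m ∉ S := by
        rw [hS]
        simp only [Finset.mem_union, Finset.mem_image, Finset.mem_range, not_or]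
        constructor
        · rintro ⟨j, hj, hje⟩; exact absurd (hκinj hje) hj.ne
        · rintro ⟨j, _, hje⟩; exact hθκ j m hje
      have hv : θ k ∉ S := by
        rw [hS]
        simp only [Finset.mem_union, Finset.mem_image, Finset.mem_range, not_or]
        constructor
        · rintro ⟨j, _, hje⟩; exact hθκ k j hje.symm
        · rintro ⟨j, hj, hje⟩; exact absurd (hθinj hje) hj.ne
      have huv : κ m ≠ θ k := fun e => hθκ k m e.symm
      have hset : Finset.image κ (Finset.range (m + 1)) ∪ Finset.image θ (Finset.range (k + 1))
          = insert (κ m) (insert (θ k) S) := by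
        rw [hS, Finset.range_add_one, Finset.range_add_one, Finset.image_insert, Finset.image_insert,
          Finset.insert_union, Finset.union_insert]
      have hset1 : insert (κ m) S
          = Finset.image κ (Finset.range (m + 1)) ∪ Finset.image θ (Finset.range k) := by
        rw [hS, Finset.range_add_one, Finset.image_insert, Finset.insert_union]
      have hset2 : insert (θ k) S
          = Finset.image κ (Finset.range m) ∪ Finset.image θ (Finset.range (k + 1)) := by
        rw [hS, Finset.range_add_one, Finset.image_insert, Finset.union_insert]
      rw [hset, symDD_rec S (hqF q) hu hv huv, hset1, hset2]
      have hd' : d ≤ ‖κ m - θ k‖ := by rw [norm_sub_rev]; exact hsep k m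
      have hden : (0:ℝ) < ‖κ m - θ k‖ := lt_of_lt_of_le hd0 hd'
      have b1 := ih (m + 1)
      have b2 := ihm
      rw [norm_div]
      have hnorm : ‖symDD (Finset.image κ (Finset.range (m + 1)) ∪ Finset.image θ (Finset.range k)) (hqF q)
          - symDD (Finset.image κ (Finset.range m) ∪ Finset.image θ (Finset.range (k + 1))) (hqF q)‖
          ≤ A ^ (m + 1 + k + q) * CstDD θ k + A ^ (m + (k + 1) + q) * CstDD θ (k + 1) :=
        (norm_sub_le _ _).trans (add_le_add b1 b2)
      have hApos : (0:ℝ) < A := by linarith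
      have hAt : (0:ℝ) < A ^ (m + 1 + k + q) := pow_pos hApos _
      have hAt2 : (0:ℝ) < A ^ (m + (k + 1) + q) := pow_pos hApos _
      have hCk := one_le_CstDD θ k
      have hCk1 := one_le_CstDD θ (k + 1)
      have hCle := CstDD_mono θ (Nat.le_succ k)
      calc ‖symDD (Finset.image κ (Finset.range (m + 1)) ∪ Finset.image θ (Finset.range k)) (hqF q)
              - symDD (Finset.image κ (Finset.range m) ∪ Finset.image θ (Finset.range (k + 1))) (hqF q)‖
            / ‖κ m - θ k‖
          ≤ (A ^ (m + 1 + k + q) * CstDD θ k + A ^ (m + (k + 1) + q) * CstDD θ (k + 1)) / d := by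
            apply div_le_div₀ ?h1 hnorm hd0 hd'
            case h1 => nlinarith
        _ ≤ A ^ (m + 1 + (k + 1) + q) * CstDD θ (k + 1) := by
            have hAd : 2 ≤ A * d := by
              rw [div_le_iff₀ hd0] at hA2d; linarith
            have e2 : m + (k + 1) + q = m + 1 + k + q := by omega
            have e3 : m + 1 + (k + 1) + q = (m + 1 + k + q) + 1 := by omega
            rw [e2, e3, pow_succ, div_le_iff₀ hd0]
            have step1 : A ^ (m + 1 + k + q) * CstDD θ k + A ^ (m + 1 + k + q) * CstDD θ (k + 1)
                ≤ 2 * (A ^ (m + 1 + k + q) * CstDD θ (k + 1)) := by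
              nlinarith [mul_nonneg hAt.le (sub_nonneg.2 hCle)]
            have step2 : 2 * (A ^ (m + 1 + k + q) * CstDD θ (k + 1))
                ≤ (A * d) * (A ^ (m + 1 + k + q) * CstDD θ (k + 1)) := by
              nlinarith [mul_pos hAt (lt_of_lt_of_le one_pos hCk1)]
            nlinarith
open Finset

lemma count_add_count_compl (pA : ℕ → Prop) [DecidablePred pA] (M : ℕ) :
    Nat.count pA M + Nat.count (fun j => ¬ pA j) M = M := by
  induction M with
  | zero => simp
  | succ M ih =>
    rw [Nat.count_succ, Nat.count_succ]
    by_cases h : pA M <;> simp [h] <;> omega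

/-- Lemma: a permutation of the interleaved sequence satisfying (1.2). -/
theorem stmt13 (θ κ : ℕ → ℂ)
    (hθbdd : ∃ M : ℝ, ∀ j, ‖θ j‖ ≤ M)
    (hθinj : Function.Injective θ) (hκinj : Function.Injective κ)
    (hκ12 : Cond12 κ)
    (hdist : ∃ d : ℝ, 0 < d ∧ ∀ i j, d ≤ dist (θ i) (κ j))
    (η : ℕ → ℂ)
    (hη : ∀ k, η k = if k % 2 = 0 then κ (k / 2) else θ (k / 2)) :
    ∃ σ₁ : ℕ → ℕ, Function.Bijective σ₁ ∧ Cond12 (η ∘ σ₁) := by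
  classical
  obtain ⟨d₀, hd₀pos, hd₀⟩ := hdist
  set d : ℝ := min d₀ 1 with hddef
  have hd0 : 0 < d := lt_min hd₀pos one_pos
  have hd1 : d ≤ 1 := min_le_right _ _
  have hsep : ∀ i j, d ≤ ‖θ i - κ j‖ := by
    intro i j
    have := hd₀ i j
    rw [Complex.dist_eq] at this
    exact le_trans (min_le_left _ _) this
  obtain ⟨R₀, hR₀pos, hκb₀⟩ := hκ12
  set R : ℝ := max R₀ 1 with hRdef
  have hR : 1 ≤ R := le_max_right _ _
  have hκb : ∀ m q : ℕ, ‖symDD (Finset.image κ (Finset.range (m + 1))) (hqF q)‖ ≤ R ^ (m + q) := by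
    intro m q
    rw [← deltaP_eq_symDD κ hκinj (hqF q) m]
    calc ‖deltaP κ (hqF q) m‖ ≤ R₀ ^ (m + q) := hκb₀ m q
      _ ≤ R ^ (m + q) := pow_le_pow_left₀ hR₀pos.le (le_max_left _ _) _
  set A : ℝ := 2 * (R + 1) / d with hAdef
  have hA1 : 1 < A := by
    rw [hAdef, lt_div_iff₀ hd0]; nlinarith
  have hA0 : 0 < A := lt_trans one_pos hA1
  -- choose sparsity targets
  have hNex : ∀ k : ℕ, ∃ N : ℕ, CstDD θ k ≤ A ^ N := by
    intro k
    obtain ⟨N, hN⟩ := pow_unbounded_of_one_lt (CstDD θ k) hA1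
    exact ⟨N, hN.le⟩
  choose N hN using hNex
  -- the positions of the θ points
  set n : ℕ → ℕ := fun k => Nat.rec (1 + N 1) (fun k nk => max (nk + 2) (N (k + 2))) k with hndef
  have hnsucc : ∀ k, n (k + 1) = max (n k + 2) (N (k + 2)) := fun k => rfl
  have hnmono : StrictMono n := by
    apply strictMono_nat_of_lt_succ
    intro k
    rw [hnsucc]
    have := le_max_left (n k + 2) (N (k + 2))
    omega
  have hn1 : ∀ k, 1 ≤ n k := by
    intro k
    induction k with
    | zero => show 1 ≤ 1 + N 1; omega
    | succ k ih => rw [hnsucc]; have := le_max_left (n k + 2) (N (k + 2)); omega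
  have hnN : ∀ k, N (k + 1) ≤ n k := by
    intro k
    cases k with
    | zero => show N 1 ≤ 1 + N 1; omega
    | succ k => rw [hnsucc]; exact le_trans (le_max_right _ _) le_rfl
  set pA : ℕ → Prop := fun j => ∃ i, n i = j with hpAdef
  set pB : ℕ → Prop := fun j => ¬ pA j with hpBdef
  have hpAinf : (setOf pA).Infinite := by
    have : setOf pA = Set.range n := rfl
    rw [this]
    exact Set.infinite_range_of_injective hnmono.injective
  have hgap : ∀ k, pB (n k + 1) := by
    intro k
    rintro ⟨i, hi⟩
    rcases le_or_gt i k with h | h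
    · have := hnmono.monotone h; omega
    · have h2 : k + 1 ≤ i := h
      have := hnmono.monotone h2
      have h3 : n k + 2 ≤ n (k + 1) := by rw [hnsucc]; exact le_trans (le_max_left _ _) le_rfl
      omega
  have hpBinf : (setOf pB).Infinite := by
    refine Set.infinite_of_injective_forall_mem (f := fun k => n k + 1) ?_ ?_
    · intro a b hab
      simp only at hab
      exact hnmono.injective (by omega)
    · intro k
      exact hgap k
  have hnth : Nat.nth pA = n := by
    refine (StrictMono.range_inj (Nat.nth_strictMono hpAinf) hnmono).1 ?_
    rw [Nat.range_nth_of_infinite hpAinf]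
    rfl
  set τ : ℕ → ℕ := fun i => if i % 2 = 1 then n (i / 2) else Nat.nth pB (i / 2) with hτdef
  have hτA : ∀ i, i % 2 = 1 → τ i = n (i / 2) := by
    intro i hi; simp only [hτdef, if_pos hi]
  have hτB : ∀ i, i % 2 = 0 → τ i = Nat.nth pB (i / 2) := by
    intro i hi; simp only [hτdef]; rw [if_neg (by omega)]
  have hτbij : Function.Bijective τ := by
    constructor
    · intro a b hab
      rcases Nat.mod_two_eq_zero_or_one a with ha | ha <;>
        rcases Nat.mod_two_eq_zero_or_one b with hb | hb
      · rw [hτB a ha, hτB b hb] at hab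
        have := Nat.nth_injective hpBinf hab
        omega
      · rw [hτB a ha, hτA b hb] at hab
        exact absurd ⟨b / 2, hab.symm⟩ (Nat.nth_mem_of_infinite hpBinf (a / 2))
      · rw [hτA a ha, hτB b hb] at hab
        exact absurd ⟨a / 2, hab⟩ (Nat.nth_mem_of_infinite hpBinf (b / 2))
      · rw [hτA a ha, hτA b hb] at hab
        have := hnmono.injective hab
        omega
    · intro j
      by_cases hj : pA j
      · obtain ⟨i, hi⟩ := hj
        refine ⟨2 * i + 1, ?_⟩
        rw [hτA (2 * i + 1) (by omega)]
        have : (2 * i + 1) / 2 = i := by omega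
        rw [this, hi]
      · refine ⟨2 * Nat.count pB j, ?_⟩
        rw [hτB _ (by omega)]
        have : 2 * Nat.count pB j / 2 = Nat.count pB j := by omega
        rw [this]
        exact Nat.nth_count hj
  set e : ℕ ≃ ℕ := Equiv.ofBijective τ hτbij with hedef
  have heτ : ∀ i, e i = τ i := fun i => rfl
  refine ⟨⇑e.symm, e.symm.bijective, ?_⟩
  have hθκ : ∀ i j, θ i ≠ κ j := by
    intro i j hc
    have := hsep i j
    rw [hc, sub_self, norm_zero] at this
    linarith
  have hηinj : Function.Injective η := by
    intro a b hab
    rw [hη a, hη b] at hab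
    rcases Nat.mod_two_eq_zero_or_one a with ha | ha <;>
      rcases Nat.mod_two_eq_zero_or_one b with hb | hb
    · rw [if_pos ha, if_pos hb] at hab
      have := hκinj hab; omega
    · rw [if_pos ha, if_neg (by omega)] at hab
      exact absurd hab.symm (hθκ _ _)
    · rw [if_neg (by omega), if_pos hb] at hab
      exact absurd hab (hθκ _ _)
    · rw [if_neg (by omega), if_neg (by omega)] at hab
      have := hθinj hab; omega
  have hxinj : Function.Injective (η ∘ ⇑e.symm) := hηinj.comp e.symm.injective
  have hprefix : ∀ p : ℕ, Finset.image (η ∘ ⇑e.symm) (Finset.range (p + 1))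
      = Finset.image κ (Finset.range (Nat.count pB (p + 1)))
        ∪ Finset.image θ (Finset.range (Nat.count pA (p + 1))) := by
    intro p
    ext z
    simp only [Finset.mem_image, Finset.mem_union, Finset.mem_range, Function.comp_apply]
    constructor
    · rintro ⟨j, hj, rfl⟩
      set i := e.symm j with hidef
      have hji : e i = j := e.apply_symm_apply j
      have hτi : τ i < p + 1 := by rw [← heτ, hji]; exact hj
      rcases Nat.mod_two_eq_zero_or_one i with hi | hi
      · left
        refine ⟨i / 2, ?_, ?_⟩
        · rw [hτB i hi] at hτi
          exact (Nat.lt_nth_iff_count_lt hpBinf).2 hτi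
        · rw [hη i, if_pos hi]
      · right
        refine ⟨i / 2, ?_, ?_⟩
        · rw [hτA i hi, ← congrFun hnth (i / 2)] at hτi
          exact (Nat.lt_nth_iff_count_lt hpAinf).2 hτi
        · rw [hη i, if_neg (by omega)]
    · rintro (⟨m, hm, rfl⟩ | ⟨k, hk, rfl⟩)
      · refine ⟨e (2 * m), ?_, ?_⟩
        · rw [heτ, hτB _ (by omega)]
          have h2 : 2 * m / 2 = m := by omega
          rw [h2]
          exact (Nat.lt_nth_iff_count_lt hpBinf).1 hm
        · rw [e.symm_apply_apply, hη, if_pos (by omega)]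
          congr 1
          omega
      · refine ⟨e (2 * k + 1), ?_, ?_⟩
        · rw [heτ, hτA _ (by omega)]
          have h2 : (2 * k + 1) / 2 = k := by omega
          rw [h2, ← congrFun hnth k]
          exact (Nat.lt_nth_iff_count_lt hpAinf).1 hk
        · rw [e.symm_apply_apply, hη, if_neg (by omega)]
          congr 1
          omega
  refine ⟨A ^ 3, by positivity, ?_⟩
  intro p q
  show ‖deltaP (η ∘ ⇑e.symm) (hqF q) p‖ ≤ (A ^ 3) ^ (p + q)
  match p with
  | 0 =>
    have : deltaP (η ∘ ⇑e.symm) (hqF q) 0 = hqF q ((η ∘ ⇑e.symm) 0) := by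
      simp [deltaP, divDiff]
    rw [this]
    calc ‖hqF q ((η ∘ ⇑e.symm) 0)‖ ≤ 1 := hqF_norm_le_one q _
      _ ≤ (A ^ 3) ^ (0 + q) := one_le_pow₀ (one_le_pow₀ hA1.le)
  | p + 1 =>
    rw [deltaP_eq_symDD _ hxinj, hprefix (p + 1)]
    set cA := Nat.count pA (p + 1 + 1) with hcAdef
    set cB := Nat.count pB (p + 1 + 1) with hcBdef
    have hcsum : cA + cB = p + 2 := count_add_count_compl pA (p + 1 + 1)
    have hCA : CstDD θ cA ≤ A ^ (p + 1) := by
      match hc : cA with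
      | 0 =>
        have : CstDD θ 0 = 1 := by unfold CstDD; simp [LamDD]
        rw [this]
        exact one_le_pow₀ hA1.le
      | c + 1 =>
        have hcount : c < Nat.count pA (p + 1 + 1) := by omega
        have hnc : n c ≤ p + 1 := by
          have := (Nat.lt_nth_iff_count_lt hpAinf).1 hcount
          rw [congrFun hnth c] at this
          omega
        calc CstDD θ (c + 1) ≤ A ^ (N (c + 1)) := hN (c + 1)
          _ ≤ A ^ (n c) := pow_le_pow_right₀ hA1.le (hnN c)
          _ ≤ A ^ (p + 1) := pow_le_pow_right₀ hA1.le hnc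
    calc ‖symDD (Finset.image κ (Finset.range cB) ∪ Finset.image θ (Finset.range cA)) (hqF q)‖
        ≤ A ^ (cB + cA + q) * CstDD θ cA :=
          mainEst θ κ d R hd0 hd1 hR hsep hθinj hκinj hκb q cA cB
      _ ≤ A ^ (p + 2 + q) * A ^ (p + 1) := by
          apply mul_le_mul ?_ hCA (le_trans zero_le_one (one_le_CstDD θ cA)) (by positivity)
          apply pow_le_pow_right₀ hA1.le
          omega
      _ ≤ (A ^ 3) ^ (p + 1 + q) := by
          rw [← pow_add, ← pow_mul]
          apply pow_le_pow_right₀ hA1.le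
          omega
end

section
/- Let (θ_j)_{j≥1} be a bounded sequence of pairwise distinct complex numbers that does NOT satisfy condition (1.2), and let (κ_j)_{j≥1} be a sequence of pairwise distinct complex numbers with dist({θ_j : j≥1}, {κ_j : j≥1}) > 0. Define η by η_{2k} := θ_k and η_{2k−1} := κ_k for k ≥ 1. Then there exists a bijection σ₂ of the positive integers such that the sequence (η_{σ₂(j)})_{j≥1} does not satisfy condition (1.2). -/
open Complex Filter Finset Topology

lemma divDiff_nil (h : ℂ → ℂ) (w : ℂ) : divDiff [] h w = h w := rfl

lemma divDiff_cons (a : ℂ) (l : List ℂ) (h : ℂ → ℂ) (w : ℂ) :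
    divDiff (a :: l) h w = (divDiff l h w - divDiff l h a) / (w - a) := rfl

lemma divDiff_congr : ∀ (L : List ℂ) (f g : ℂ → ℂ) (w : ℂ),
    (∀ x ∈ w :: L, f x = g x) → divDiff L f w = divDiff L g w := by
  intro L
  induction L with
  | nil => intro f g w h; exact h w (by simp)
  | cons a L ih =>
      intro f g w h
      rw [divDiff_cons, divDiff_cons, ih f g w ?_, ih f g a ?_]
      · intro x hx
        apply h
        simp only [List.mem_cons] at hx ⊢
        tauto
      · intro x hx
        apply h
        simp only [List.mem_cons] at hx ⊢
        tauto

lemma divDiff_sum {ι : Type*} (s : Finset ι) (f : ι → ℂ → ℂ) :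
    ∀ (L : List ℂ) (w : ℂ),
    divDiff L (fun z => ∑ j ∈ s, f j z) w = ∑ j ∈ s, divDiff L (f j) w := by
  intro L
  induction L with
  | nil => intro w; rfl
  | cons a L ih =>
      intro w
      rw [divDiff_cons, ih, ih, ← Finset.sum_sub_distrib, Finset.sum_div]
      exact Finset.sum_congr rfl fun j _ => (divDiff_cons a L (f j) w).symm

lemma divDiff_const_mul (c : ℂ) (f : ℂ → ℂ) : ∀ (L : List ℂ) (w : ℂ),
    divDiff L (fun z => c * f z) w = c * divDiff L f w := by
  intro L
  induction L with
  | nil => intro w; rfl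
  | cons a L ih =>
      intro w
      rw [divDiff_cons, ih, ih, divDiff_cons]
      ring

noncomputable def hcomp : ℕ → List ℂ → ℂ
  | k, [] => if k = 0 then 1 else 0
  | k, a :: l => ∑ i ∈ Finset.range (k + 1), a ^ i * hcomp (k - i) l

lemma hcomp_zero : ∀ l : List ℂ, hcomp 0 l = 1 := by
  intro l
  induction l with
  | nil => simp [hcomp]
  | cons a l ih => simp [hcomp, ih]

lemma hcomp_cons (k : ℕ) (a : ℂ) (l : List ℂ) :
    hcomp (k + 1) (a :: l) = a * hcomp k (a :: l) + hcomp (k + 1) l := by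
  show (∑ i ∈ Finset.range (k + 2), a ^ i * hcomp (k + 1 - i) l) = _
  rw [Finset.sum_range_succ']
  simp only [pow_zero, one_mul, Nat.sub_zero]
  have : ∀ i, a ^ (i+1) * hcomp (k + 1 - (i+1)) l = a * (a ^ i * hcomp (k - i) l) := by
    intro i
    rw [Nat.succ_sub_succ]
    ring
  rw [Finset.sum_congr rfl fun i _ => this i, ← Finset.mul_sum]
  rfl

lemma hcomp_sub : ∀ (k : ℕ) (w a : ℂ) (l : List ℂ),
    hcomp (k + 1) (w :: l) - hcomp (k + 1) (a :: l) = (w - a) * hcomp k (w :: a :: l) := by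
  intro k
  induction k with
  | zero =>
      intro w a l
      rw [hcomp_cons, hcomp_cons, hcomp_zero, hcomp_zero, hcomp_zero]
      ring
  | succ k ih =>
      intro w a l
      rw [hcomp_cons (k+1) w l, hcomp_cons (k+1) a l, hcomp_cons k w (a :: l)]
      linear_combination w * ih w a l

lemma hcomp_single (n : ℕ) (w : ℂ) : hcomp n [w] = w ^ n := by
  show (∑ i ∈ Finset.range (n + 1), w ^ i * hcomp (n - i) []) = w ^ n
  rw [Finset.sum_eq_single n]
  · simp [hcomp]
  · intro i hi hne
    have : ¬ (n - i = 0) := by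
      simp only [Finset.mem_range] at hi
      omega
    simp [hcomp, this]
  · intro h; exact absurd (Finset.self_mem_range_succ n) h

lemma divDiff_pow : ∀ (L : List ℂ) (w : ℂ), (w :: L).Nodup → ∀ n : ℕ,
    divDiff L (fun z => z ^ n) w
      = if L.length ≤ n then hcomp (n - L.length) (w :: L) else 0 := by
  intro L
  induction L with
  | nil =>
      intro w _ n
      simp [divDiff_nil, hcomp_single]
  | cons a L ih =>
      intro w hnd n
      have hwa : w ≠ a := by
        simp only [List.nodup_cons, List.mem_cons] at hnd
        exact fun e => hnd.1 (Or.inl e)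
      have hw : (w :: L).Nodup := by
        simp only [List.nodup_cons, List.mem_cons] at hnd ⊢
        exact ⟨fun h => hnd.1 (Or.inr h), hnd.2.2⟩
      have ha : (a :: L).Nodup := hnd.of_cons
      rw [divDiff_cons, ih w hw n, ih a ha n]
      by_cases h1 : L.length + 1 ≤ n
      · have h0 : L.length ≤ n := by omega
        rw [if_pos h0, if_pos h0]
        obtain ⟨k, hk⟩ : ∃ k, n - L.length = k + 1 := ⟨n - L.length - 1, by omega⟩
        rw [hk, hcomp_sub, mul_comm, mul_div_assoc, div_self (sub_ne_zero.mpr hwa), mul_one]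
        rw [List.length_cons, if_pos h1]
        congr 1
        omega
      · rw [List.length_cons, if_neg h1]
        by_cases h0 : L.length ≤ n
        · have : n - L.length = 0 := by omega
          rw [if_pos h0, if_pos h0, this, hcomp_zero, hcomp_zero, sub_self, zero_div]
        · rw [if_neg h0, if_neg h0, sub_self, zero_div]

lemma hcomp_bound (M : ℝ) (hM : 1 ≤ M) : ∀ (l : List ℂ) (k : ℕ),
    (∀ x ∈ l, ‖x‖ ≤ M) → ‖hcomp k l‖ ≤ M ^ k * 4 ^ k * 4 ^ l.length := by
  intro l
  induction l with
  | nil =>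
      intro k h
      have h1 : (1:ℝ) ≤ M ^ k * 4 ^ k * 4 ^ (List.length ([] : List ℂ)) := by
        have : (1:ℝ) ≤ M ^ k := one_le_pow₀ hM
        have h4 : (1:ℝ) ≤ 4 ^ k := one_le_pow₀ (by norm_num)
        simp only [List.length_nil, pow_zero, mul_one]
        nlinarith
      show ‖if k = 0 then (1:ℂ) else 0‖ ≤ _
      split_ifs
      · simpa using h1
      · simp only [norm_zero]; linarith
  | cons a l ih =>
      intro k h
      have ha : ‖a‖ ≤ M := h a (by simp)
      have hl : ∀ x ∈ l, ‖x‖ ≤ M := fun x hx => h x (List.mem_cons_of_mem a hx)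
      show ‖∑ i ∈ Finset.range (k + 1), a ^ i * hcomp (k - i) l‖ ≤ _
      calc ‖∑ i ∈ Finset.range (k + 1), a ^ i * hcomp (k - i) l‖
          ≤ ∑ i ∈ Finset.range (k + 1), ‖a ^ i * hcomp (k - i) l‖ := norm_sum_le _ _
        _ ≤ ∑ i ∈ Finset.range (k + 1), M ^ k * 4 ^ l.length * 4 ^ (k - i) := by
            apply Finset.sum_le_sum
            intro i hi
            simp only [Finset.mem_range] at hi
            have hik : i ≤ k := by omega
            rw [norm_mul, norm_pow]
            have h2 : ‖hcomp (k - i) l‖ ≤ M ^ (k-i) * 4 ^ (k-i) * 4 ^ l.length :=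
              ih (k - i) hl
            have h3 : ‖a‖ ^ i ≤ M ^ i := by
              apply pow_le_pow_left₀ (norm_nonneg a) ha
            have hMi : (0:ℝ) ≤ M ^ i := by positivity
            have : ‖a‖ ^ i * ‖hcomp (k - i) l‖ ≤ M ^ i * (M ^ (k-i) * 4 ^ (k-i) * 4 ^ l.length) := by
              apply mul_le_mul h3 h2 (norm_nonneg _) hMi
            calc ‖a‖ ^ i * ‖hcomp (k - i) l‖
                ≤ M ^ i * (M ^ (k-i) * 4 ^ (k-i) * 4 ^ l.length) := this
              _ = M ^ k * 4 ^ l.length * 4 ^ (k - i) := by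
                  rw [show M ^ i * (M ^ (k-i) * 4 ^ (k-i) * 4 ^ l.length)
                      = (M ^ i * M ^ (k-i)) * (4 ^ (k-i) * 4 ^ l.length) by ring,
                    ← pow_add]
                  rw [Nat.add_sub_cancel' hik]
                  ring
        _ = M ^ k * 4 ^ l.length * ∑ i ∈ Finset.range (k + 1), (4:ℝ) ^ (k - i) := by
            rw [← Finset.mul_sum]
        _ ≤ M ^ k * 4 ^ l.length * (2 * 4 ^ k) := by
            have hsum : ∑ i ∈ Finset.range (k + 1), (4:ℝ) ^ (k - i)
                = ∑ i ∈ Finset.range (k + 1), (4:ℝ) ^ i := by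
              rw [← Finset.sum_range_reflect]
              apply Finset.sum_congr rfl
              intro i hi
              congr 1
              simp only [Finset.mem_range] at hi
              omega
            rw [hsum]
            have h4 : ∑ i ∈ Finset.range (k + 1), (4:ℝ) ^ i = (4 ^ (k+1) - 1) / 3 := by
              rw [geom_sum_eq (by norm_num : (4:ℝ) ≠ 1)]
              norm_num
            have h5 : (0:ℝ) < 4 ^ k := by positivity
            have h6 : ∑ i ∈ Finset.range (k + 1), (4:ℝ) ^ i ≤ 2 * 4 ^ k := by
              rw [h4, pow_succ]
              nlinarith
            have h7 : (0:ℝ) ≤ M ^ k * 4 ^ l.length := by positivity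
            exact mul_le_mul_of_nonneg_left h6 h7
        _ ≤ M ^ k * 4 ^ k * 4 ^ (a :: l).length := by
            rw [List.length_cons, pow_succ]
            have hX : (0:ℝ) ≤ M ^ k * 4 ^ k * 4 ^ l.length := by positivity
            nlinarith




lemma newton (τ : ℕ → ℂ) (h : ℂ → ℂ) :
    ∀ (m : ℕ) (w : ℂ), (∀ i, i < m → w ≠ τ i) →
      h w = (∑ j ∈ Finset.range m, deltaP τ h j * ∏ i ∈ Finset.range j, (w - τ i))
        + divDiff (((List.range m).reverse).map τ) h w * ∏ i ∈ Finset.range m, (w - τ i) := by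
  intro m
  induction m with
  | zero => intro w _; simp [divDiff]
  | succ m ih =>
      intro w hw
      have hk : ((List.range (m+1)).reverse).map τ
          = τ m :: ((List.range m).reverse).map τ := by
        rw [List.range_succ, List.reverse_append]
        simp
      have hwm : w - τ m ≠ 0 := sub_ne_zero.mpr (hw m (Nat.lt_succ_self m))
      have h2 : divDiff (((List.range m).reverse).map τ) h w
          = deltaP τ h m + (w - τ m) * divDiff (((List.range (m+1)).reverse).map τ) h w := by
        rw [hk, divDiff_cons, mul_div_cancel₀ _ hwm]
        show _ = deltaP τ h m + (divDiff (((List.range m).reverse).map τ) h w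
          - divDiff (((List.range m).reverse).map τ) h (τ m))
        have : deltaP τ h m = divDiff (((List.range m).reverse).map τ) h (τ m) := rfl
        rw [this]
        ring
      rw [ih w (fun i hi => hw i (Nat.lt_succ_of_lt hi)), h2, Finset.sum_range_succ,
        Finset.prod_range_succ]
      ring

lemma newton_interp (τ : ℕ → ℂ) (h : ℂ → ℂ)
    (hinj : ∀ i j : ℕ, i < j → τ i ≠ τ j) (m i : ℕ) (him : i < m) :
    ∑ j ∈ Finset.range m, deltaP τ h j * ∏ i' ∈ Finset.range j, (τ i - τ i') = h (τ i) := by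
  have h1 := newton τ h i (τ i) (fun i' hi' => (hinj i' i hi').symm)
  have h2 : ∑ j ∈ Finset.range (i+1), deltaP τ h j * ∏ i' ∈ Finset.range j, (τ i - τ i')
      = h (τ i) := by
    rw [Finset.sum_range_succ]
    rw [h1]
    congr 1
  rw [← h2]
  symm
  apply Finset.sum_subset
  · exact Finset.range_subset_range.mpr him
  · intro j hj hnot
    simp only [Finset.mem_range, not_lt] at hj hnot
    have : i ∈ Finset.range j := Finset.mem_range.mpr (by omega)
    rw [Finset.prod_eq_zero this (sub_self (τ i)), mul_zero]

open Polynomial in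
lemma coeff_bound (f : ℕ → ℂ) : ∀ (j n : ℕ),
    ‖(∏ i ∈ Finset.range j, (X - C (f i))).coeff n‖
      ≤ ∏ i ∈ Finset.range j, (1 + ‖f i‖) := by
  intro j
  induction j with
  | zero =>
      intro n
      simp only [Finset.range_zero, Finset.prod_empty, Polynomial.coeff_one]
      split_ifs <;> simp
  | succ j ih =>
      intro n
      rw [Finset.prod_range_succ, Finset.prod_range_succ]
      have hB : (0:ℝ) ≤ ∏ i ∈ Finset.range j, (1 + ‖f i‖) := by positivity
      cases n with
      | zero =>
          rw [Polynomial.mul_coeff_zero]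
          simp only [Polynomial.coeff_sub, Polynomial.coeff_X_zero, Polynomial.coeff_C_zero,
            zero_sub, norm_mul, norm_neg]
          have := ih 0
          have hf : (0:ℝ) ≤ ‖f j‖ := norm_nonneg _
          nlinarith [norm_nonneg ((∏ i ∈ Finset.range j, (X - C (f i))).coeff 0)]
      | succ n =>
          rw [Polynomial.coeff_mul_X_sub_C]
          have h1 := ih n
          have h2 := ih (n+1)
          have h3 : ‖(∏ i ∈ Finset.range j, (X - C (f i))).coeff n
              - (∏ i ∈ Finset.range j, (X - C (f i))).coeff (n+1) * f j‖
              ≤ ‖(∏ i ∈ Finset.range j, (X - C (f i))).coeff n‖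
                + ‖(∏ i ∈ Finset.range j, (X - C (f i))).coeff (n+1)‖ * ‖f j‖ := by
            refine (norm_sub_le _ _).trans ?_
            rw [norm_mul]
          refine h3.trans ?_
          have hf : (0:ℝ) ≤ ‖f j‖ := norm_nonneg _
          nlinarith

open Polynomial in
lemma natDegree_prod_lt (f : ℕ → ℂ) (j : ℕ) :
    (∏ i ∈ Finset.range j, (X - C (f i))).natDegree < j + 1 := by
  have h1 : (∏ i ∈ Finset.range j, (X - C (f i))).natDegree
      ≤ ∑ i ∈ Finset.range j, (X - C (f i)).natDegree := Polynomial.natDegree_prod_le _ _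
  have h2 : ∑ i ∈ Finset.range j, (X - C (f i)).natDegree = j := by
    simp [Polynomial.natDegree_X_sub_C]
  omega

lemma key (θ κ τ : ℕ → ℂ) (M : ℝ) (hM : 1 ≤ M) (hθM : ∀ t, ‖θ t‖ ≤ M)
    (cnt : ℕ → ℕ) (hcntmono : Monotone cnt) (hcntle : ∀ p, cnt p ≤ p)
    (hpos : ∀ t, τ (t + cnt t) = θ t)
    (hprefix : ∀ p i, i < p + cnt p →
      (∃ t, t < p ∧ τ i = θ t) ∨ (∃ c, c < cnt p ∧ τ i = κ c))
    (hτinj : Function.Injective τ)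
    (hθinj : Function.Injective θ)
    (hQ : ∀ p, ∏ c ∈ Finset.range (cnt p), (1 + ‖κ c‖) ≤ (2:ℝ) ^ p)
    (hC : Cond12 τ) : Cond12 θ := by
  obtain ⟨R₀, hR₀pos, hR₀⟩ := hC
  set R : ℝ := max R₀ 1 with hRdef
  have hR1 : (1:ℝ) ≤ R := le_max_right _ _
  have hRb : ∀ j q : ℕ,
      ‖deltaP τ (fun ζ => ((starRingEnd ℂ) ζ / (1 + (Complex.normSq ζ : ℂ))) ^ q) j‖
        ≤ R ^ (j + q) := by
    intro j q
    exact (hR₀ j q).trans (pow_le_pow_left₀ hR₀pos.le (le_max_left _ _) _)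
  set β : ℝ := R * (1 + M) * (4 * M) * 2 with hβdef
  have hA : (1:ℝ) ≤ R * (1 + M) := by nlinarith
  have hB : (1:ℝ) ≤ 4 * M := by linarith
  have hAB : (1:ℝ) ≤ R * (1 + M) * (4 * M) := by nlinarith
  have hβ1 : (1:ℝ) ≤ β := by rw [hβdef]; nlinarith
  refine ⟨256 * β ^ 3 * R, by positivity, ?_⟩
  intro p q
  by_cases hpq : p = 0 ∧ q = 0
  · obtain ⟨rfl, rfl⟩ := hpq
    simp [deltaP, divDiff]
  have hpq1 : 1 ≤ p + q := by omega
  set hq : ℂ → ℂ := fun ζ => ((starRingEnd ℂ) ζ / (1 + (Complex.normSq ζ : ℂ))) ^ q with hqdef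
  set m : ℕ := p + cnt p + 1 with hmdef
  set Lp : List ℂ := (List.range p).reverse.map θ with hLpdef
  have hLplen : Lp.length = p := by simp [hLpdef]
  have hmemLp : ∀ x ∈ Lp, ∃ t, t < p ∧ x = θ t := by
    intro x hx
    simp only [hLpdef, List.mem_map, List.mem_reverse, List.mem_range] at hx
    obtain ⟨t, ht, rfl⟩ := hx
    exact ⟨t, ht, rfl⟩
  have hnodup : (θ p :: Lp).Nodup := by
    rw [List.nodup_cons]
    constructor
    · intro hx
      obtain ⟨t, ht, he⟩ := hmemLp _ hx
      exact absurd (hθinj he) (by omega)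
    · exact (List.nodup_reverse.mpr List.nodup_range).map hθinj
  -- interpolation
  have hPh : ∀ t, t ≤ p →
      hq (θ t) = ∑ j ∈ Finset.range m, deltaP τ hq j * ∏ i ∈ Finset.range j, (θ t - τ i) := by
    intro t ht
    have h1 : t + cnt t < m := by
      have := hcntmono ht
      omega
    have h2 := newton_interp τ hq (fun i j hij e => (Nat.ne_of_lt hij) (hτinj e)) m
      (t + cnt t) h1
    rw [hpos t] at h2
    exact h2.symm
  have step1 : deltaP θ hq p
      = ∑ j ∈ Finset.range m, deltaP τ hq j
          * divDiff Lp (fun z => ∏ i ∈ Finset.range j, (z - τ i)) (θ p) := by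
    show divDiff Lp hq (θ p) = _
    rw [divDiff_congr Lp hq
      (fun z => ∑ j ∈ Finset.range m, deltaP τ hq j * ∏ i ∈ Finset.range j, (z - τ i)) (θ p) ?_]
    · rw [divDiff_sum]
      exact Finset.sum_congr rfl fun j _ =>
        divDiff_const_mul (deltaP τ hq j) (fun z => ∏ i ∈ Finset.range j, (z - τ i)) Lp (θ p)
    · intro x hx
      rcases List.mem_cons.mp hx with rfl | hx
      · exact hPh p le_rfl
      · obtain ⟨t, ht, rfl⟩ := hmemLp x hx
        exact hPh t ht.le
  -- prefix product bound
  have hτprod : ∀ j, j ≤ p + cnt p →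
      ∏ i ∈ Finset.range j, (1 + ‖τ i‖) ≤ (1 + M) ^ j * 2 ^ p := by
    intro j hj
    set W : ℕ → ℝ := fun i => ∏ c ∈ Finset.range (cnt p), (if τ i = κ c then 1 + ‖κ c‖ else 1)
      with hWdef
    have hfge1 : ∀ (i : ℕ) (c : ℕ), (1:ℝ) ≤ (if τ i = κ c then 1 + ‖κ c‖ else 1) := by
      intro i c
      split_ifs
      · nlinarith [norm_nonneg (κ c)]
      · exact le_rfl
    have hW1 : ∀ i, 1 ≤ W i := by
      intro i
      calc (1:ℝ) = ∏ _c ∈ Finset.range (cnt p), 1 := by simp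
        _ ≤ W i := Finset.prod_le_prod (fun c _ => zero_le_one) (fun c _ => hfge1 i c)
    have hptw : ∀ i ∈ Finset.range j, (1 + ‖τ i‖) ≤ (1 + M) * W i := by
      intro i hi
      have hilt : i < p + cnt p := by
        simp only [Finset.mem_range] at hi
        omega
      rcases hprefix p i hilt with ⟨t, _, he⟩ | ⟨c, hc, he⟩
      · have h1 : 1 + ‖τ i‖ ≤ 1 + M := by rw [he]; linarith [hθM t]
        calc 1 + ‖τ i‖ ≤ 1 + M := h1
          _ ≤ (1 + M) * W i := le_mul_of_one_le_right (by linarith) (hW1 i)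
      · have h1 : 1 + ‖κ c‖ ≤ W i := by
          have hsplit := Finset.mul_prod_erase (Finset.range (cnt p))
            (fun c' => if τ i = κ c' then 1 + ‖κ c'‖ else 1) (Finset.mem_range.mpr hc)
          have herase : (1:ℝ) ≤ ∏ c' ∈ (Finset.range (cnt p)).erase c,
              (if τ i = κ c' then 1 + ‖κ c'‖ else 1) := by
            calc (1:ℝ) = ∏ _c ∈ (Finset.range (cnt p)).erase c, 1 := by simp
              _ ≤ _ := Finset.prod_le_prod (fun c' _ => zero_le_one) (fun c' _ => hfge1 i c')
          calc 1 + ‖κ c‖ ≤ (1 + ‖κ c‖) * ∏ c' ∈ (Finset.range (cnt p)).erase c,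
                (if τ i = κ c' then 1 + ‖κ c'‖ else 1) :=
              le_mul_of_one_le_right (by positivity) herase
            _ = W i := by
              show _ = ∏ c' ∈ Finset.range (cnt p), (if τ i = κ c' then 1 + ‖κ c'‖ else 1)
              rw [← hsplit]
              congr 1
              simp [he]
        rw [he]
        calc 1 + ‖κ c‖ ≤ W i := h1
          _ ≤ (1 + M) * W i := le_mul_of_one_le_left (le_trans zero_le_one (hW1 i)) (by linarith)
    calc ∏ i ∈ Finset.range j, (1 + ‖τ i‖)
        ≤ ∏ i ∈ Finset.range j, ((1 + M) * W i) :=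
          Finset.prod_le_prod (fun i _ => by positivity) hptw
      _ = (1 + M) ^ j * ∏ i ∈ Finset.range j, W i := by
          rw [Finset.prod_mul_distrib, Finset.prod_const, Finset.card_range]
      _ ≤ (1 + M) ^ j * 2 ^ p := by
          have h3 : ∏ i ∈ Finset.range j, W i
              = ∏ c ∈ Finset.range (cnt p), ∏ i ∈ Finset.range j,
                  (if τ i = κ c then 1 + ‖κ c‖ else 1) := Finset.prod_comm
          have h4 : ∏ i ∈ Finset.range j, W i ≤ 2 ^ p := by
            rw [h3]
            refine le_trans (Finset.prod_le_prod (fun c _ => by positivity)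
              (fun c _ => ?_)) (hQ p)
            -- inner product ≤ 1 + ‖κ c‖
            rw [Finset.prod_ite, Finset.prod_const, Finset.prod_const, one_pow, mul_one]
            have hcard : (Finset.filter (fun i => τ i = κ c) (Finset.range j)).card ≤ 1 := by
              refine Finset.card_le_one.mpr (fun a ha b hb => ?_)
              simp only [Finset.mem_filter] at ha hb
              exact hτinj (ha.2.trans hb.2.symm)
            rcases Nat.le_one_iff_eq_zero_or_eq_one.mp hcard with h0 | h0
            · rw [h0, pow_zero]
              nlinarith [norm_nonneg (κ c)]
            · rw [h0, pow_one]
          have h5 : (0:ℝ) ≤ (1 + M) ^ j := by positivity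
          exact mul_le_mul_of_nonneg_left h4 h5
  -- bound each divided difference of the Newton basis polynomial
  have hωb : ∀ j, j < m →
      ‖divDiff Lp (fun z => ∏ i ∈ Finset.range j, (z - τ i)) (θ p)‖
        ≤ ((j:ℝ)+1) * ((1 + M) ^ j * 2 ^ p) * ((4 * M) ^ j * 4 ^ (p + 1)) := by
    intro j hjm
    set Pj := ∏ i ∈ Finset.range j, (Polynomial.X - Polynomial.C (τ i)) with hPjdef
    have hfun : (fun z : ℂ => ∏ i ∈ Finset.range j, (z - τ i))
        = fun z => ∑ n ∈ Finset.range (j + 1), Pj.coeff n * z ^ n := by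
      funext z
      rw [← Polynomial.eval_eq_sum_range' (natDegree_prod_lt τ j) z]
      simp [hPjdef, Polynomial.eval_prod]
    rw [hfun, divDiff_sum]
    have hpern : ∀ n ∈ Finset.range (j+1),
        ‖divDiff Lp (fun z => Pj.coeff n * z ^ n) (θ p)‖
          ≤ ((1 + M) ^ j * 2 ^ p) * ((4 * M) ^ j * 4 ^ (p + 1)) := by
      intro n hn
      simp only [Finset.mem_range] at hn
      rw [divDiff_const_mul, norm_mul]
      have hc1 : ‖Pj.coeff n‖ ≤ (1 + M) ^ j * 2 ^ p := by
        refine le_trans (coeff_bound τ j n) (hτprod j ?_)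
        omega
      have hc2 : ‖divDiff Lp (fun z => z ^ n) (θ p)‖ ≤ (4 * M) ^ j * 4 ^ (p + 1) := by
        rw [divDiff_pow Lp (θ p) hnodup n]
        split_ifs with hle
        · have hmem : ∀ x ∈ (θ p :: Lp), ‖x‖ ≤ M := by
            intro x hx
            rcases List.mem_cons.mp hx with rfl | hx
            · exact hθM p
            · obtain ⟨t, _, rfl⟩ := hmemLp x hx
              exact hθM t
          have hb := hcomp_bound M hM (θ p :: Lp) (n - Lp.length) hmem
          refine hb.trans ?_
          have hlen : (θ p :: Lp).length = p + 1 := by simp [hLplen]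
          rw [hlen]
          have h6 : M ^ (n - Lp.length) * 4 ^ (n - Lp.length) = (4 * M) ^ (n - Lp.length) := by
            rw [mul_pow]; ring
          rw [h6]
          have h7 : (4 * M) ^ (n - Lp.length) ≤ (4 * M) ^ j := by
            apply pow_le_pow_right₀ (by nlinarith)
            omega
          have h8 : (0:ℝ) ≤ 4 ^ (p+1) := by positivity
          exact mul_le_mul_of_nonneg_right h7 h8
        · simp only [norm_zero]
          positivity
      exact mul_le_mul hc1 hc2 (norm_nonneg _) (by positivity)
    calc ‖∑ n ∈ Finset.range (j+1), divDiff Lp (fun z => Pj.coeff n * z ^ n) (θ p)‖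
        ≤ ∑ n ∈ Finset.range (j+1), ‖divDiff Lp (fun z => Pj.coeff n * z ^ n) (θ p)‖ :=
          norm_sum_le _ _
      _ ≤ ∑ n ∈ Finset.range (j+1), ((1 + M) ^ j * 2 ^ p) * ((4 * M) ^ j * 4 ^ (p + 1)) :=
          Finset.sum_le_sum hpern
      _ = ((j:ℝ)+1) * ((1 + M) ^ j * 2 ^ p) * ((4 * M) ^ j * 4 ^ (p + 1)) := by
          rw [Finset.sum_const, Finset.card_range]
          push_cast
          ring
  -- final assembly
  rw [step1]
  have hCq : (0:ℝ) ≤ R ^ q * 2 ^ p * 4 ^ (p+1) := by positivity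
  calc ‖∑ j ∈ Finset.range m, deltaP τ hq j
          * divDiff Lp (fun z => ∏ i ∈ Finset.range j, (z - τ i)) (θ p)‖
      ≤ ∑ j ∈ Finset.range m, R ^ (j + q)
          * (((j:ℝ)+1) * ((1 + M) ^ j * 2 ^ p) * ((4 * M) ^ j * 4 ^ (p + 1))) := by
        refine (norm_sum_le _ _).trans (Finset.sum_le_sum fun j hj => ?_)
        rw [norm_mul]
        exact mul_le_mul (hRb j q) (hωb j (Finset.mem_range.mp hj)) (norm_nonneg _)
          (by positivity)
    _ ≤ ∑ j ∈ Finset.range m, β ^ j * (R ^ q * 2 ^ p * 4 ^ (p+1)) := by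
        refine Finset.sum_le_sum fun j hj => ?_
        have hj2 : ((j:ℝ)+1) ≤ 2 ^ j := by
          have h : j + 1 ≤ 2 ^ j := Nat.lt_two_pow_self
          exact_mod_cast h
        calc R ^ (j+q) * (((j:ℝ)+1) * ((1 + M) ^ j * 2 ^ p) * ((4 * M) ^ j * 4 ^ (p + 1)))
            = (R ^ j * (1 + M) ^ j * (4 * M) ^ j * ((j:ℝ)+1)) * (R ^ q * 2 ^ p * 4 ^ (p+1)) := by
              rw [pow_add]; ring
          _ ≤ (R ^ j * (1 + M) ^ j * (4 * M) ^ j * 2 ^ j) * (R ^ q * 2 ^ p * 4 ^ (p+1)) := by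
              refine mul_le_mul_of_nonneg_right ?_ hCq
              refine mul_le_mul_of_nonneg_left hj2 ?_
              positivity
          _ = β ^ j * (R ^ q * 2 ^ p * 4 ^ (p+1)) := by
              have hβj : β ^ j = R ^ j * (1+M) ^ j * (4*M) ^ j * 2 ^ j := by
                rw [hβdef, mul_pow, mul_pow, mul_pow]
              rw [hβj]
    _ ≤ (m:ℝ) * (β ^ m * (R ^ q * 2 ^ p * 4 ^ (p+1))) := by
        have h1 : ∀ j ∈ Finset.range m, β ^ j * (R ^ q * 2 ^ p * 4 ^ (p+1))
            ≤ β ^ m * (R ^ q * 2 ^ p * 4 ^ (p+1)) := by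
          intro j hj
          refine mul_le_mul_of_nonneg_right ?_ hCq
          exact pow_le_pow_right₀ hβ1 (Finset.mem_range.mp hj).le
        calc ∑ j ∈ Finset.range m, β ^ j * (R ^ q * 2 ^ p * 4 ^ (p+1))
            ≤ ∑ _j ∈ Finset.range m, β ^ m * (R ^ q * 2 ^ p * 4 ^ (p+1)) :=
              Finset.sum_le_sum h1
          _ = (m:ℝ) * (β ^ m * (R ^ q * 2 ^ p * 4 ^ (p+1))) := by
              rw [Finset.sum_const, Finset.card_range, nsmul_eq_mul]
    _ ≤ (2:ℝ) ^ m * (β ^ m * (R ^ q * 2 ^ p * 4 ^ (p+1))) := by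
        refine mul_le_mul_of_nonneg_right ?_ (by positivity)
        have h : m ≤ 2 ^ m := (Nat.lt_two_pow_self (n := m)).le
        exact_mod_cast h
    _ = (2*β) ^ m * (R ^ q * 2 ^ p * 4 ^ (p+1)) := by
        rw [mul_pow (2:ℝ) β m]
        ring
    _ ≤ (2*β) ^ (2*p+1) * (R ^ q * 2 ^ p * 4 ^ (p+1)) := by
        refine mul_le_mul_of_nonneg_right ?_ hCq
        refine pow_le_pow_right₀ (by nlinarith) ?_
        have := hcntle p
        omega
    _ = (8*β) * ((32 * β^2) ^ p * R ^ q) := by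
        have h1 : ((2:ℝ)*β) ^ (2*p+1) = (((2*β)^2) ^ p) * (2*β) := by
          rw [pow_succ, pow_mul]
        have h2 : (4:ℝ) ^ (p+1) = 4 ^ p * 4 := by rw [pow_succ]
        rw [h1, h2]
        have h3 : (((2*β)^2) ^ p) * (2:ℝ) ^ p * 4 ^ p = (32 * β ^ 2) ^ p := by
          rw [← mul_pow, ← mul_pow]
          congr 1
          ring
        calc ((((2*β)^2) ^ p) * (2*β)) * (R ^ q * 2 ^ p * (4 ^ p * 4))
            = ((((2*β)^2) ^ p) * (2:ℝ) ^ p * 4 ^ p) * ((2*β) * 4 * R ^ q) := by ring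
          _ = (32 * β ^ 2) ^ p * ((2*β) * 4 * R ^ q) := by rw [h3]
          _ = (8*β) * ((32 * β^2) ^ p * R ^ q) := by ring
    _ ≤ (256 * β ^ 3 * R) ^ (p + q) := by
        have h8 : (1:ℝ) ≤ 8*β := by nlinarith
        have h32 : (1:ℝ) ≤ 32*β^2 := by nlinarith
        have e1 : (8*β) ≤ (8*β) ^ (p+q) := le_self_pow₀ h8 (by omega)
        have e2 : (32*β^2) ^ p ≤ (32*β^2) ^ (p+q) := pow_le_pow_right₀ h32 (by omega)
        have e3 : R ^ q ≤ R ^ (p+q) := pow_le_pow_right₀ hR1 (by omega)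
        calc (8*β) * ((32 * β^2) ^ p * R ^ q)
            ≤ (8*β) ^ (p+q) * ((32 * β^2) ^ (p+q) * R ^ (p+q)) := by
              refine mul_le_mul e1 ?_ (by positivity) (by positivity)
              exact mul_le_mul e2 e3 (by positivity) (by positivity)
          _ = (256 * β ^ 3 * R) ^ (p + q) := by
              rw [← mul_pow, ← mul_pow]
              congr 1
              ring

/-- Lemma: a permutation of the interleaved sequence violating (1.2). -/
theorem stmt14 (θ κ : ℕ → ℂ)
    (hθbdd : ∃ M : ℝ, ∀ j, ‖θ j‖ ≤ M)
    (hθinj : Function.Injective θ) (hθnot : ¬ Cond12 θ)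
    (hκinj : Function.Injective κ)
    (hdist : ∃ d : ℝ, 0 < d ∧ ∀ i j, d ≤ dist (θ i) (κ j))
    (η : ℕ → ℂ)
    (hη : ∀ k, η k = if k % 2 = 0 then κ (k / 2) else θ (k / 2)) :
    ∃ σ₂ : ℕ → ℕ, Function.Bijective σ₂ ∧ ¬ Cond12 (η ∘ σ₂) := by

  classical
  obtain ⟨M₀, hM₀⟩ := hθbdd
  set M : ℝ := max M₀ 1 with hMdef
  have hM : 1 ≤ M := le_max_right _ _
  have hθM : ∀ t, ‖θ t‖ ≤ M := fun t => (hM₀ t).trans (le_max_left _ _)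
  obtain ⟨d, hd, hdd⟩ := hdist
  have hθκ : ∀ t c, θ t ≠ κ c := by
    intro t c e
    have h := hdd t c
    rw [e, dist_self] at h
    linarith
  -- choose exponents controlling the κ products
  set Q : ℕ → ℝ := fun c => ∏ i ∈ Finset.range c, (1 + ‖κ i‖) with hQdef
  have hgex : ∀ c : ℕ, ∃ n : ℕ, Q (c+1) ≤ (2:ℝ) ^ n := by
    intro c
    obtain ⟨n, hn⟩ := pow_unbounded_of_one_lt (Q (c+1)) (one_lt_two (α := ℝ))
    exact ⟨n, hn.le⟩
  choose g hg using hgex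
  -- the block lengths
  set N : ℕ → ℕ := fun c => Nat.rec (g 0 + 1) (fun c ih => ih + g (c+1) + 1) c with hNdef
  have hN0 : N 0 = g 0 + 1 := rfl
  have hNs : ∀ c, N (c+1) = N c + g (c+1) + 1 := fun c => rfl
  have hNmono : StrictMono N := strictMono_nat_of_lt_succ (fun c => by rw [hNs]; omega)
  have hNg : ∀ c, g c ≤ N c := by
    intro c
    cases c with
    | zero => omega
    | succ c => rw [hNs]; omega
  have hQN : ∀ c, Q (c+1) ≤ (2:ℝ) ^ (N c) :=
    fun c => (hg c).trans (pow_le_pow_right₀ one_le_two (hNg c))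
  have hNge : ∀ c, c + 1 ≤ N c := by
    intro c
    induction c with
    | zero => omega
    | succ c ih => rw [hNs]; omega
  -- the count function
  have hcex : ∀ p : ℕ, ∃ c, p < N c := fun p => ⟨p, by have := hNge p; omega⟩
  set cnt : ℕ → ℕ := fun p => Nat.find (hcex p) with hcntdef
  have hcnt_lt : ∀ p, p < N (cnt p) := fun p => Nat.find_spec (hcex p)
  have hcnt_iff : ∀ p c, c < cnt p ↔ N c ≤ p := by
    intro p c
    constructor
    · intro h
      exact le_of_not_gt (Nat.find_min (hcex p) h)
    · intro h
      by_contra hcon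
      push_neg at hcon
      have := hNmono.le_iff_le.mpr hcon
      have := hcnt_lt p
      omega
  have hcntmono : Monotone cnt := by
    intro a b hab
    exact Nat.find_min' (hcex a) (lt_of_le_of_lt hab (hcnt_lt b))
  have hcntle : ∀ p, cnt p ≤ p := fun p => Nat.find_min' (hcex p) (by have := hNge p; omega)
  -- the rearrangement
  set ρ : ℕ → ℕ := fun x => if x % 2 = 0 then N (x/2) + x/2 else x/2 + cnt (x/2) with hρdef
  have hρeven : ∀ c, ρ (2*c) = N c + c := by
    intro c
    simp only [hρdef]
    rw [if_pos (by omega)]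
    congr 2 <;> omega
  have hρodd : ∀ t, ρ (2*t+1) = t + cnt t := by
    intro t
    simp only [hρdef]
    rw [if_neg (by omega)]
    congr 2 <;> omega
  have hmixed : ∀ c t, N c + c ≠ t + cnt t := by
    intro c t h
    rcases le_or_gt (N c) t with h1 | h1
    · have h2 : c < cnt t := (hcnt_iff t c).mpr h1
      omega
    · have h2 : ¬ (c < cnt t) := fun hcon => by
        have := (hcnt_iff t c).mp hcon
        omega
      omega
  have hκmono : ∀ c c', c < c' → N c + c < N c' + c' := by
    intro c c' h
    have := hNmono h
    omega
  have hθmono : ∀ t t', t ≤ t' → t + cnt t ≤ t' + cnt t' := by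
    intro t t' h
    have := hcntmono h
    omega
  have hθsmono : ∀ t t', t < t' → t + cnt t < t' + cnt t' := by
    intro t t' h
    have := hcntmono h.le
    omega
  have hρinj : Function.Injective ρ := by
    intro x y hxy
    obtain ⟨c, rfl | rfl⟩ : ∃ c, x = 2*c ∨ x = 2*c+1 := ⟨x/2, by omega⟩ <;>
      obtain ⟨c', rfl | rfl⟩ : ∃ c', y = 2*c' ∨ y = 2*c'+1 := ⟨y/2, by omega⟩
    · rw [hρeven, hρeven] at hxy
      rcases lt_trichotomy c c' with h | h | h
      · exact absurd hxy (Nat.ne_of_lt (hκmono _ _ h))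
      · omega
      · exact absurd hxy.symm (Nat.ne_of_lt (hκmono _ _ h))
    · rw [hρeven, hρodd] at hxy
      exact absurd hxy (hmixed c c')
    · rw [hρodd, hρeven] at hxy
      exact absurd hxy.symm (hmixed c' c)
    · rw [hρodd, hρodd] at hxy
      rcases lt_trichotomy c c' with h | h | h
      · exact absurd hxy (Nat.ne_of_lt (hθsmono _ _ h))
      · omega
      · exact absurd hxy.symm (Nat.ne_of_lt (hθsmono _ _ h))
  have hρsurj : Function.Surjective ρ := by
    intro mv
    have hex2 : ∃ c, mv ≤ N c + c := ⟨mv, by have := hNge mv; omega⟩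
    set cs : ℕ := Nat.find hex2 with hcsdef
    have h1 : mv ≤ N cs + cs := Nat.find_spec hex2
    have h2 : ∀ c, c < cs → N c + c < mv := by
      intro c hc
      have := Nat.find_min hex2 hc
      omega
    rcases eq_or_lt_of_le h1 with he | hlt
    · exact ⟨2*cs, by rw [hρeven]; omega⟩
    · have hcsm : cs ≤ mv := by
        rcases Nat.eq_zero_or_pos cs with h0 | h0
        · omega
        · have := h2 (cs - 1) (by omega)
          have := hNge (cs - 1)
          omega
      refine ⟨2*(mv - cs)+1, ?_⟩
      rw [hρodd]
      have hcnteq : cnt (mv - cs) = cs := by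
        have hub : cnt (mv - cs) ≤ cs := by
          by_contra hcon
          push_neg at hcon
          have := (hcnt_iff (mv - cs) cs).mp hcon
          omega
        have hlb : cs ≤ cnt (mv - cs) := by
          rcases Nat.eq_zero_or_pos cs with h0 | h0
          · omega
          · have hx := h2 (cs - 1) (by omega)
            have : N (cs - 1) ≤ mv - cs := by omega
            have := (hcnt_iff (mv - cs) (cs - 1)).mpr this
            omega
        omega
      omega
  have hρbij : Function.Bijective ρ := ⟨hρinj, hρsurj⟩
  set e : ℕ ≃ ℕ := Equiv.ofBijective ρ hρbij with hedef
  refine ⟨fun n => e.symm n, e.symm.bijective, ?_⟩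
  intro hC
  apply hθnot
  set τ : ℕ → ℂ := η ∘ (fun n => e.symm n) with hτdef
  have hσρ : ∀ x, e.symm (ρ x) = x := by
    intro x
    have : ρ x = e x := rfl
    rw [this, Equiv.symm_apply_apply]
  have hτθ : ∀ t, τ (t + cnt t) = θ t := by
    intro t
    show η (e.symm (t + cnt t)) = θ t
    rw [← hρodd t, hσρ, hη]
    rw [if_neg (by omega)]
    congr 1
    omega
  have hτκ : ∀ c, τ (N c + c) = κ c := by
    intro c
    show η (e.symm (N c + c)) = κ c
    rw [← hρeven c, hσρ, hη]
    rw [if_pos (by omega)]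
    congr 1
    omega
  have hηinj : Function.Injective η := by
    intro a b hab
    rw [hη a, hη b] at hab
    by_cases ha : a % 2 = 0 <;> by_cases hb : b % 2 = 0
    · rw [if_pos ha, if_pos hb] at hab
      have := hκinj hab
      omega
    · rw [if_pos ha, if_neg hb] at hab
      exact absurd hab.symm (hθκ _ _)
    · rw [if_neg ha, if_pos hb] at hab
      exact absurd hab (hθκ _ _)
    · rw [if_neg ha, if_neg hb] at hab
      have := hθinj hab
      omega
  have hτinj : Function.Injective τ := hηinj.comp e.symm.injective
  have hprefix : ∀ p i, i < p + cnt p →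
      (∃ t, t < p ∧ τ i = θ t) ∨ (∃ c, c < cnt p ∧ τ i = κ c) := by
    intro p i hi
    obtain ⟨x, hx⟩ := hρsurj i
    obtain ⟨y, rfl | rfl⟩ : ∃ y, x = 2*y ∨ x = 2*y+1 := ⟨x/2, by omega⟩
    · right
      rw [hρeven] at hx
      refine ⟨y, ?_, by rw [← hx]; exact hτκ y⟩
      by_contra hcon
      push_neg at hcon
      have h3 : ¬ (y < cnt p) := by omega
      rw [hcnt_iff] at h3
      omega
    · left
      rw [hρodd] at hx
      refine ⟨y, ?_, by rw [← hx]; exact hτθ y⟩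
      by_contra hcon
      push_neg at hcon
      have := hθmono p y hcon
      omega
  have hQp : ∀ p, ∏ c ∈ Finset.range (cnt p), (1 + ‖κ c‖) ≤ (2:ℝ) ^ p := by
    intro p
    rcases Nat.eq_zero_or_pos (cnt p) with h0 | h0
    · rw [h0]
      simp only [Finset.range_zero, Finset.prod_empty]
      exact one_le_pow₀ one_le_two
    · obtain ⟨c, hc⟩ : ∃ c, cnt p = c + 1 := ⟨cnt p - 1, by omega⟩
      have hNc : N c ≤ p := (hcnt_iff p c).mp (by omega)
      rw [hc]
      exact (hQN c).trans (pow_le_pow_right₀ one_le_two hNc)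
  exact key θ κ τ M hM hθM cnt hcntmono hcntle hτθ hprefix hτinj hθinj hQp hC
end

section
/- Let (η_j)_{j≥1} be an injective sequence of complex numbers and let ζ₀ ∈ ℂ be a point of the closure of {η_j : j ≥ 1} such that for every open neighborhood V of ζ₀ and every holomorphic function g : V → ℂ there exists some j with η_j ∈ V and g(η_j) ≠ conj(η_j). Then there exists a strictly increasing sequence of indices (j_k)_{k≥1} such that η_{j_k} → ζ₀ as k → ∞ and the set {η_{j_k} : k ≥ 1} is not locally interpolable by real-analytic curves. -/
open Complex Filter Finset Topology

/-- Lemma: extraction of a convergent subsequence that is not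
locally interpolable by real-analytic curves. -/
theorem stmt19 (η : ℕ → ℂ) (hinj : Function.Injective η)
    (ζ₀ : ℂ) (hζ₀ : ζ₀ ∈ closure (Set.range η))
    (hbad : ∀ V : Set ℂ, IsOpen V → ζ₀ ∈ V →
      ∀ g : ℂ → ℂ, DifferentiableOn ℂ g V →
        ∃ j, η j ∈ V ∧ g (η j) ≠ (starRingEnd ℂ) (η j)) :
    ∃ j : ℕ → ℕ, StrictMono j ∧
      Filter.Tendsto (η ∘ j) Filter.atTop (nhds ζ₀) ∧
      ¬ LocallyInterpolable (Set.range (η ∘ j)) := by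

  have cast_le : ∀ {a b : ℕ}, a ≤ b → (1:ℝ)/(b+1) ≤ 1/(a+1) := fun {a b} h =>
    one_div_le_one_div_of_le (by positivity) (by exact_mod_cast Nat.succ_le_succ h)
  -- key step lemma: defeat a holomorphic g₀ (with g₀ ζ₀ = conj ζ₀) at a new large index
  have step : ∀ (g₀ : ℂ → ℂ) (r : ℝ), 0 < r → DifferentiableOn ℂ g₀ (Metric.ball ζ₀ r) →
      g₀ ζ₀ = (starRingEnd ℂ) ζ₀ → ∀ (M : ℕ) (ε : ℝ), 0 < ε →
      ∃ i, M < i ∧ dist (η i) ζ₀ < min r ε ∧ η i ≠ ζ₀ ∧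
        g₀ (η i) ≠ (starRingEnd ℂ) (η i) := by
    intro g₀ r hr hdiff hζ M ε hε
    set D : Set ℂ := (η '' Set.Iic M) \ {ζ₀} with hD
    have hDfin : D.Finite := ((Set.finite_Iic M).image η).diff
    set V : Set ℂ := Metric.ball ζ₀ (min r ε) \ D with hV
    have hVopen : IsOpen V := Metric.isOpen_ball.sdiff hDfin.isClosed
    have hζV : ζ₀ ∈ V := ⟨Metric.mem_ball_self (lt_min hr hε), fun h => h.2 rfl⟩
    have hdiff' : DifferentiableOn ℂ g₀ V :=
      hdiff.mono (Set.diff_subset.trans (Metric.ball_subset_ball (min_le_left _ _)))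
    obtain ⟨i, hiV, hne⟩ := hbad V hVopen hζV g₀ hdiff'
    have hηne : η i ≠ ζ₀ := by
      intro h; exact hne (by rw [h, hζ])
    refine ⟨i, ?_, by simpa [Metric.mem_ball] using hiV.1, hηne, hne⟩
    by_contra h
    push_neg at h
    exact hiV.2 ⟨⟨i, h, rfl⟩, hηne⟩
  -- auxiliary sequence α converging to ζ₀
  have H : ∀ (M k : ℕ), ∃ i, M < i ∧ dist (η i) ζ₀ < 1 / (k + 1 : ℝ) ∧ η i ≠ ζ₀ := by
    intro M k
    obtain ⟨i, hMi, hdist, hne, -⟩ := step (fun _ => (starRingEnd ℂ) ζ₀) 1 one_pos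
      (differentiableOn_const _) rfl M (1 / (k + 1 : ℝ)) (by positivity)
    exact ⟨i, hMi, lt_of_lt_of_le hdist (min_le_right _ _), hne⟩
  let α : ℕ → ℕ := fun k => Nat.rec (H 0 0).choose (fun k ih => (H ih (k + 1)).choose) k
  have hα : ∀ k, dist (η (α k)) ζ₀ < 1 / (k + 1 : ℝ) ∧ η (α k) ≠ ζ₀ := by
    intro k
    cases k with
    | zero => exact ⟨(H 0 0).choose_spec.2.1, (H 0 0).choose_spec.2.2⟩
    | succ k => exact ⟨(H (α k) (k+1)).choose_spec.2.1, (H (α k) (k+1)).choose_spec.2.2⟩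
  have hαmono : StrictMono α := strictMono_nat_of_lt_succ fun k => (H (α k) (k+1)).choose_spec.1
  have tendsto_of_dist : ∀ (j : ℕ → ℕ), (∀ n, dist (η (j n)) ζ₀ < 1 / (n + 1 : ℝ)) →
      Filter.Tendsto (η ∘ j) Filter.atTop (nhds ζ₀) := by
    intro j hj
    rw [Metric.tendsto_atTop]
    intro ε hε
    obtain ⟨N, hN⟩ := exists_nat_one_div_lt hε
    exact ⟨N, fun n hn => lt_trans (lt_of_lt_of_le (hj n) (cast_le hn)) hN⟩
  have htendα : Filter.Tendsto (η ∘ α) Filter.atTop (nhds ζ₀) :=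
    tendsto_of_dist α fun n => (hα n).1
  by_cases hP : ∃ r : ℝ, 0 < r ∧ ∃ g₀ : ℂ → ℂ, DifferentiableOn ℂ g₀ (Metric.ball ζ₀ r) ∧
      ∃ I : ℕ, ∀ i, I ≤ i → η (α i) ∈ Metric.ball ζ₀ r →
        g₀ (η (α i)) = (starRingEnd ℂ) (η (α i))
  · -- Case: a germ g₀ matches conj on a tail of α; interleave α with points defeating g₀
    obtain ⟨r, hr, g₀, hg₀, I, hI⟩ := hP
    have hev_ball : ∀ᶠ i in Filter.atTop, η (α i) ∈ Metric.ball ζ₀ r :=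
      htendα.eventually_mem (Metric.isOpen_ball.mem_nhds (Metric.mem_ball_self hr))
    have hζeq : g₀ ζ₀ = (starRingEnd ℂ) ζ₀ := by
      have h1 : Filter.Tendsto (fun i => g₀ (η (α i))) Filter.atTop (nhds (g₀ ζ₀)) :=
        ((hg₀.continuousOn.continuousAt
          (Metric.isOpen_ball.mem_nhds (Metric.mem_ball_self hr))).tendsto).comp htendα
      have h2 : Filter.Tendsto (fun i => (starRingEnd ℂ) (η (α i))) Filter.atTop
          (nhds ((starRingEnd ℂ) ζ₀)) := (Complex.continuous_conj.tendsto ζ₀).comp htendα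
      apply tendsto_nhds_unique_of_eventuallyEq h1 h2
      filter_upwards [hev_ball, Filter.eventually_ge_atTop I] with i hib hiI
      exact hI i hiI hib
    have Hstep : ∀ (n M : ℕ), ∃ i, M < i ∧ dist (η i) ζ₀ < 1 / (n + 1 : ℝ) ∧ η i ≠ ζ₀ ∧
        (Even n → g₀ (η i) = (starRingEnd ℂ) (η i)) ∧
        (¬ Even n → g₀ (η i) ≠ (starRingEnd ℂ) (η i)) := by
      intro n M
      by_cases hn : Even n
      · have hpos : (0:ℝ) < min r (1 / (n + 1 : ℝ)) := lt_min hr (by positivity)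
        obtain ⟨N, hN⟩ := Metric.tendsto_atTop.1 htendα _ hpos
        set i := max (max N I) (M + 1) with hi
        have hiN : N ≤ i := le_trans (le_max_left N I) (le_max_left _ _)
        have hdisti := hN i hiN
        refine ⟨α i, ?_, lt_of_lt_of_le hdisti (min_le_right _ _), (hα i).2,
          fun _ => ?_, fun h => absurd hn h⟩
        · calc M < M + 1 := Nat.lt_succ_self M
            _ ≤ i := le_max_right _ _
            _ ≤ α i := hαmono.le_apply
        · exact hI i (le_trans (le_max_right N I) (le_max_left _ _))
            (Metric.mem_ball.2 (lt_of_lt_of_le hdisti (min_le_left _ _)))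
      · obtain ⟨i, hMi, hdist, hne, hneq⟩ := step g₀ r hr hg₀ hζeq M (1 / (n + 1 : ℝ))
          (by positivity)
        exact ⟨i, hMi, lt_of_lt_of_le hdist (min_le_right _ _), hne,
          fun h => absurd h hn, fun _ => hneq⟩
    let j : ℕ → ℕ := fun n => Nat.rec (Hstep 0 0).choose (fun n ih => (Hstep (n + 1) ih).choose) n
    have hj : ∀ n, dist (η (j n)) ζ₀ < 1 / (n + 1 : ℝ) ∧ η (j n) ≠ ζ₀ ∧
        (Even n → g₀ (η (j n)) = (starRingEnd ℂ) (η (j n))) ∧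
        (¬ Even n → g₀ (η (j n)) ≠ (starRingEnd ℂ) (η (j n))) := by
      intro n
      cases n with
      | zero => exact (Hstep 0 0).choose_spec.2
      | succ n => exact (Hstep (n+1) (j n)).choose_spec.2
    have hjmono : StrictMono j :=
      strictMono_nat_of_lt_succ fun n => (Hstep (n+1) (j n)).choose_spec.1
    have htendj : Filter.Tendsto (η ∘ j) Filter.atTop (nhds ζ₀) :=
      tendsto_of_dist j fun n => (hj n).1
    refine ⟨j, hjmono, htendj, ?_⟩
    intro hLI
    have hζcl : ζ₀ ∈ closure (Set.range (η ∘ j)) :=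
      mem_closure_of_tendsto htendj (Filter.Eventually.of_forall fun n => Set.mem_range_self n)
    obtain ⟨V, hVopen, hζV, g, hgdiff, hmatch⟩ := hLI ζ₀ hζcl
    obtain ⟨s, hs, hball⟩ := Metric.isOpen_iff.1 hVopen ζ₀ hζV
    set ρ := min r s with hρdef
    have hρ : 0 < ρ := lt_min hr hs
    have hEq : Set.EqOn g g₀ (Metric.ball ζ₀ ρ) := by
      have hga : AnalyticOnNhd ℂ g (Metric.ball ζ₀ ρ) :=
        (hgdiff.mono ((Metric.ball_subset_ball (min_le_right _ _)).trans hball)).analyticOnNhd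
          Metric.isOpen_ball
      have hg₀a : AnalyticOnNhd ℂ g₀ (Metric.ball ζ₀ ρ) :=
        (hg₀.mono (Metric.ball_subset_ball (min_le_left _ _))).analyticOnNhd Metric.isOpen_ball
      apply hga.eqOn_of_preconnected_of_frequently_eq hg₀a (convex_ball ζ₀ ρ).isPreconnected
        (Metric.mem_ball_self hρ)
      have ht2 : Filter.Tendsto (fun k => η (j (2 * k))) Filter.atTop
          (nhdsWithin ζ₀ {ζ₀}ᶜ) := by
        rw [tendsto_nhdsWithin_iff]
        refine ⟨htendj.comp (tendsto_atTop_mono (fun k => by simp only [id_eq]; omega) tendsto_id), ?_⟩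
        exact Filter.Eventually.of_forall fun k => (hj (2*k)).2.1
      apply ht2.frequently
      apply Filter.Eventually.frequently
      obtain ⟨K, hK⟩ := exists_nat_one_div_lt hs
      filter_upwards [Filter.eventually_ge_atTop K] with k hk
      have hmem : η (j (2 * k)) ∈ Metric.ball ζ₀ s :=
        Metric.mem_ball.2 (lt_trans (lt_of_lt_of_le (hj (2*k)).1 (cast_le (by omega))) hK)
      have h1 : (starRingEnd ℂ) (η (j (2*k))) = g (η (j (2*k))) :=
        hmatch _ ⟨⟨2*k, rfl⟩, hball hmem⟩
      have h2 : g₀ (η (j (2*k))) = (starRingEnd ℂ) (η (j (2*k))) :=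
        (hj (2*k)).2.2.1 (even_two_mul k)
      rw [← h1, h2]
    obtain ⟨n, hn⟩ := exists_nat_one_div_lt hρ
    have hmem : η (j (2*n+1)) ∈ Metric.ball ζ₀ ρ :=
      Metric.mem_ball.2 (lt_trans (lt_of_lt_of_le (hj (2*n+1)).1 (cast_le (by omega))) hn)
    have h1 : (starRingEnd ℂ) (η (j (2*n+1))) = g (η (j (2*n+1))) :=
      hmatch _ ⟨⟨2*n+1, rfl⟩, hball (Metric.ball_subset_ball (min_le_right _ _) hmem)⟩
    have h2 : g₀ (η (j (2*n+1))) ≠ (starRingEnd ℂ) (η (j (2*n+1))) :=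
      (hj (2*n+1)).2.2.2 (by simp [parity_simps])
    exact h2 ((hEq hmem).symm.trans h1.symm)
  · -- Case: no germ matches a tail of α; then α itself works
    refine ⟨α, hαmono, htendα, ?_⟩
    intro hLI
    have hζcl : ζ₀ ∈ closure (Set.range (η ∘ α)) :=
      mem_closure_of_tendsto htendα (Filter.Eventually.of_forall fun n => Set.mem_range_self n)
    obtain ⟨V, hVopen, hζV, g, hgdiff, hmatch⟩ := hLI ζ₀ hζcl
    obtain ⟨s, hs, hball⟩ := Metric.isOpen_iff.1 hVopen ζ₀ hζV
    exact hP ⟨s, hs, g, hgdiff.mono hball, 0,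
      fun i _ hib => (hmatch _ ⟨⟨i, rfl⟩, hball hib⟩).symm⟩
end
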